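/- arXiv:1311.5832 — 5 statements merged into one kernel-verified Lean document; each statement's English description precedes it below -/
import Mathlib

section
/- Let d ≥ 2, let C be a d-copula, let u ∈ [0,1]^d, and let i, j ∈ {1,…,d}. Let τ_{ij} denote the transposition of i and j, and u_{τ_{ij}} the vector u with components i and j interchanged. Then |C(u) − C(u_{τ_{ij}})| ≤ |u_i − u_j|. -/
/-- A `d`-copula: a function `C : [0,1]^d → ℝ` (defined on all of `(Fin d → ℝ)`,
with the copula conditions imposed on `[0,1]^d`) that is grounded, has uniform
one-dimensional margins, and is `d`-increasing. -/
def IsCopula (d : ℕ) (C : (Fin d → ℝ) → ℝ) : Prop :=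
  (∀ u : Fin d → ℝ, (∀ i, u i ∈ Set.Icc (0:ℝ) 1) → (∃ i, u i = 0) → C u = 0) ∧
  (∀ u : Fin d → ℝ, (∀ i, u i ∈ Set.Icc (0:ℝ) 1) →
    ∀ i : Fin d, (∀ j, j ≠ i → u j = 1) → C u = u i) ∧
  (∀ a b : Fin d → ℝ, (∀ i, a i ∈ Set.Icc (0:ℝ) 1) → (∀ i, b i ∈ Set.Icc (0:ℝ) 1) →
    (∀ i, a i ≤ b i) →
    0 ≤ ∑ S : Finset (Fin d),
        (-1 : ℝ) ^ (d - S.card) * C (fun k => if k ∈ S then b k else a k))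
lemma copula_pair (d : ℕ) (hd : 2 ≤ d) (C : (Fin d → ℝ) → ℝ) (hC : IsCopula d C)
    (u : Fin d → ℝ) (hu : ∀ i, u i ∈ Set.Icc (0:ℝ) 1) {i j : Fin d} (hij : i ≠ j)
    {s t w w' : ℝ}
    (hs : s ∈ Set.Icc (0:ℝ) 1) (ht : t ∈ Set.Icc (0:ℝ) 1)
    (hw : w ∈ Set.Icc (0:ℝ) 1) (hw' : w' ∈ Set.Icc (0:ℝ) 1)
    (hst : s ≤ t) (hww : w ≤ w') :
    C (fun m => if m = i then t else if m = j then w else u m) -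
      C (fun m => if m = i then s else if m = j then w else u m) ≤
    C (fun m => if m = i then t else if m = j then w' else u m) -
      C (fun m => if m = i then s else if m = j then w' else u m) := by
  set P : ℝ → ℝ → (Fin d → ℝ) := fun x y m => if m = i then x else if m = j then y else u m
    with hP
  set a : Fin d → ℝ := fun m => if m = i then s else if m = j then w else 0 with ha
  set b : Fin d → ℝ := P t w' with hb
  have hain : ∀ m, a m ∈ Set.Icc (0:ℝ) 1 := by
    intro m; simp only [ha]; split
    · exact hs
    · split
      · exact hw
      · exact ⟨le_refl 0, zero_le_one⟩
  have hbin : ∀ m, b m ∈ Set.Icc (0:ℝ) 1 := by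
    intro m; simp only [hb, hP]; split
    · exact ht
    · split
      · exact hw'
      · exact hu m
  have hab : ∀ m, a m ≤ b m := by
    intro m; simp only [ha, hb, hP]; split
    · exact hst
    · split
      · exact hww
      · exact (hu m).1
  have hvol := hC.2.2 a b hain hbin hab
  set f : Finset (Fin d) → ℝ :=
    fun S => (-1 : ℝ) ^ (d - S.card) * C (fun m => if m ∈ S then b m else a m) with hf
  have hvin : ∀ S : Finset (Fin d), ∀ m, (if m ∈ S then b m else a m) ∈ Set.Icc (0:ℝ) 1 := by
    intro S m; split
    · exact hbin m
    · exact hain m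
  set R : Finset (Fin d) := (Finset.univ.erase i).erase j with hR
  have hiR : i ∉ R := by simp [hR]
  have hjR : j ∉ R := by simp [hR]
  have hmR : ∀ m, m ≠ i → m ≠ j → m ∈ R := by
    intro m h1 h2; simp [hR, h1, h2]
  set T : Finset (Finset (Fin d)) :=
    {R, insert i R, insert j R, Finset.univ} with hT
  have hz : ∀ S ∈ (Finset.univ : Finset (Finset (Fin d))), S ∉ T → f S = 0 := by
    intro S _ hS
    have hm : ∃ m, m ∉ S ∧ m ≠ i ∧ m ≠ j := by
      by_contra hcon
      push_neg at hcon
      have hRS : R ⊆ S := by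
        intro m hm
        by_contra hms
        rcases eq_or_ne m i with rfl | hmi
        · exact hiR hm
        · exact hjR ((hcon m hms hmi) ▸ hm)
      apply hS
      simp only [hT, Finset.mem_insert, Finset.mem_singleton]
      by_cases hi : i ∈ S <;> by_cases hj : j ∈ S
      · right; right; right
        ext m
        simp only [Finset.mem_univ, iff_true]
        by_contra hms
        rcases eq_or_ne m i with rfl | hmi
        · exact hms hi
        · exact hms ((hcon m hms hmi) ▸ hj)
      · right; left
        ext m
        simp only [Finset.mem_insert]
        constructor
        · intro hmS
          by_cases hmi : m = i
          · exact Or.inl hmi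
          · right
            apply hmR m hmi
            rintro rfl; exact hj hmS
        · rintro (rfl | hmRm)
          · exact hi
          · exact hRS hmRm
      · right; right; left
        ext m
        simp only [Finset.mem_insert]
        constructor
        · intro hmS
          by_cases hmj : m = j
          · exact Or.inl hmj
          · right
            apply hmR m _ hmj
            rintro rfl; exact hi hmS
        · rintro (rfl | hmRm)
          · exact hj
          · exact hRS hmRm
      · left
        ext m
        constructor
        · intro hmS
          apply hmR m
          · rintro rfl; exact hi hmS
          · rintro rfl; exact hj hmS
        · exact fun h => hRS h
    obtain ⟨m, hmS, hmi, hmj⟩ := hm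
    have : C (fun m => if m ∈ S then b m else a m) = 0 := by
      apply hC.1 _ (hvin S)
      exact ⟨m, by simp [hmS, ha, hmi, hmj]⟩
    simp [hf, this]
  -- distinctness
  have hIn : j ∉ insert i R := by
    simp only [Finset.mem_insert]
    rintro (h | h)
    · exact hij h.symm
    · exact hjR h
  have hJn : i ∉ insert j R := by
    simp only [Finset.mem_insert]
    rintro (h | h)
    · exact hij h
    · exact hiR h
  have d1 : R ≠ insert i R := fun h => hiR (h ▸ Finset.mem_insert_self i R)
  have d2 : R ≠ insert j R := fun h => hjR (h ▸ Finset.mem_insert_self j R)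
  have d3 : R ≠ Finset.univ := fun h => hiR (h ▸ Finset.mem_univ i)
  have d4 : insert i R ≠ insert j R := fun h => hIn (h ▸ Finset.mem_insert_self j R)
  have d5 : insert i R ≠ Finset.univ := fun h => hIn (h ▸ Finset.mem_univ j)
  have d6 : insert j R ≠ Finset.univ := fun h => hJn (h ▸ Finset.mem_univ i)
  have hsum : ∑ S : Finset (Fin d), f S
      = f R + (f (insert i R) + (f (insert j R) + f Finset.univ)) := by
    rw [← Finset.sum_subset (Finset.subset_univ T) hz]
    rw [hT]
    rw [Finset.sum_insert (by simp [d1, d2, d3])]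
    rw [Finset.sum_insert (by simp [d4, d5])]
    rw [Finset.sum_insert (by simp [d6])]
    rw [Finset.sum_singleton]
  -- cards
  have hcardR : R.card = d - 2 := by
    rw [hR, Finset.card_erase_of_mem (by simp [Ne.symm hij]),
      Finset.card_erase_of_mem (Finset.mem_univ i), Finset.card_univ, Fintype.card_fin]
    omega
  have hcardI : (insert i R).card = d - 1 := by
    rw [Finset.card_insert_of_notMem hiR, hcardR]; omega
  have hcardJ : (insert j R).card = d - 1 := by
    rw [Finset.card_insert_of_notMem hjR, hcardR]; omega
  -- vertices
  have hvR : (fun m => if m ∈ R then b m else a m) = P s w := by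
    funext m
    by_cases hmi : m = i
    · simp [hmi, hiR, ha, hP]
    · by_cases hmj : m = j
      · simp [hmj, hjR, ha, hP, Ne.symm hij]
      · simp [hmR m hmi hmj, hb, hP, hmi, hmj]
  have hvI : (fun m => if m ∈ insert i R then b m else a m) = P t w := by
    funext m
    by_cases hmi : m = i
    · simp [hmi, hb, hP]
    · by_cases hmj : m = j
      · simp [hmj, hIn, ha, hP, Ne.symm hij]
      · simp [Finset.mem_insert, hmR m hmi hmj, hb, hP, hmi, hmj]
  have hvJ : (fun m => if m ∈ insert j R then b m else a m) = P s w' := by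
    funext m
    by_cases hmi : m = i
    · simp [hmi, hJn, ha, hP]
    · by_cases hmj : m = j
      · simp [hmj, hb, hP, Ne.symm hij]
      · simp [Finset.mem_insert, hmR m hmi hmj, hb, hP, hmi, hmj]
  have hvU : (fun m => if m ∈ (Finset.univ : Finset (Fin d)) then b m else a m) = P t w' := by
    funext m; simp [hb]
  have e2 : d - (d - 2) = 2 := by omega
  have e1 : d - (d - 1) = 1 := by omega
  have e0 : d - d = 0 := by omega
  have hfR : f R = C (P s w) := by
    rw [hf]; dsimp only; rw [hcardR, hvR, e2]; ring
  have hfI : f (insert i R) = - C (P t w) := by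
    rw [hf]; dsimp only; rw [hcardI, hvI, e1]; ring
  have hfJ : f (insert j R) = - C (P s w') := by
    rw [hf]; dsimp only; rw [hcardJ, hvJ, e1]; ring
  have hfU : f Finset.univ = C (P t w') := by
    rw [hf]; dsimp only; rw [Finset.card_univ, Fintype.card_fin, hvU, e0]; ring
  rw [hsum, hfR, hfI, hfJ, hfU] at hvol
  simp only [hP] at hvol ⊢
  linarith
lemma copula_mono (d : ℕ) (hd : 2 ≤ d) (C : (Fin d → ℝ) → ℝ) (hC : IsCopula d C)
    (u : Fin d → ℝ) (hu : ∀ i, u i ∈ Set.Icc (0:ℝ) 1) (k : Fin d) {s t : ℝ}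
    (hs : s ∈ Set.Icc (0:ℝ) 1) (ht : t ∈ Set.Icc (0:ℝ) 1) (hst : s ≤ t) :
    C (fun m => if m = k then s else u m) ≤ C (fun m => if m = k then t else u m) := by
  set a : Fin d → ℝ := fun m => if m = k then s else 0 with ha
  set b : Fin d → ℝ := fun m => if m = k then t else u m with hb
  have hain : ∀ m, a m ∈ Set.Icc (0:ℝ) 1 := by
    intro m; simp only [ha]; split
    · exact hs
    · exact ⟨le_refl 0, zero_le_one⟩
  have hbin : ∀ m, b m ∈ Set.Icc (0:ℝ) 1 := by
    intro m; simp only [hb]; split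
    · exact ht
    · exact hu m
  have hab : ∀ m, a m ≤ b m := by
    intro m; simp only [ha, hb]; split
    · exact hst
    · exact (hu m).1
  have hvol := hC.2.2 a b hain hbin hab
  set f : Finset (Fin d) → ℝ :=
    fun S => (-1 : ℝ) ^ (d - S.card) * C (fun m => if m ∈ S then b m else a m) with hf
  -- vertices are in the unit cube
  have hvin : ∀ S : Finset (Fin d), ∀ m, (if m ∈ S then b m else a m) ∈ Set.Icc (0:ℝ) 1 := by
    intro S m; split
    · exact hbin m
    · exact hain m
  -- terms vanish unless S ⊇ univ.erase k
  have hz : ∀ S ∈ (Finset.univ : Finset (Finset (Fin d))),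
      S ∉ ({Finset.univ.erase k, Finset.univ} : Finset (Finset (Fin d))) → f S = 0 := by
    intro S _ hS
    have hm : ∃ m, m ∉ S ∧ m ≠ k := by
      by_contra hcon
      push_neg at hcon
      apply hS
      simp only [Finset.mem_insert, Finset.mem_singleton]
      by_cases hk : k ∈ S
      · right; ext m
        simp only [Finset.mem_univ, iff_true]
        by_contra hms
        exact hms (hcon m hms ▸ hk)
      · left; ext m
        simp only [Finset.mem_erase, Finset.mem_univ, and_true]
        constructor
        · intro hmS; rintro rfl; exact hk hmS
        · intro hmk; by_contra hmS; exact hmk (hcon m hmS)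
    obtain ⟨m, hmS, hmk⟩ := hm
    have : C (fun m => if m ∈ S then b m else a m) = 0 := by
      apply hC.1 _ (hvin S)
      exact ⟨m, by simp [hmS, ha, hmk]⟩
    simp [hf, this]
  have hne : (Finset.univ.erase k : Finset (Fin d)) ≠ Finset.univ := by
    intro h
    have := h ▸ Finset.mem_univ k
    exact (Finset.mem_erase.mp this).1 rfl
  have hsum : ∑ S : Finset (Fin d), f S = f (Finset.univ.erase k) + f Finset.univ := by
    rw [← Finset.sum_subset
      (Finset.subset_univ ({Finset.univ.erase k, Finset.univ} : Finset (Finset (Fin d)))) hz]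
    exact Finset.sum_pair hne
  -- compute the two remaining terms
  have hcard1 : (Finset.univ.erase k : Finset (Fin d)).card = d - 1 := by
    rw [Finset.card_erase_of_mem (Finset.mem_univ k), Finset.card_univ, Fintype.card_fin]
  have hv1 : (fun m => if m ∈ (Finset.univ.erase k : Finset (Fin d)) then b m else a m)
      = fun m => if m = k then s else u m := by
    funext m
    by_cases hmk : m = k <;> simp [hmk, ha, hb, hne]
  have hv2 : (fun m => if m ∈ (Finset.univ : Finset (Fin d)) then b m else a m) = b := by
    funext m; simp
  have e1 : d - (d - 1) = 1 := by omega
  have e2 : d - d = 0 := by omega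
  have hf1 : f (Finset.univ.erase k) = - C (fun m => if m = k then s else u m) := by
    rw [hf]; dsimp only; rw [hcard1, hv1, e1]; ring
  have hf2 : f Finset.univ = C (fun m => if m = k then t else u m) := by
    rw [hf]; dsimp only; rw [Finset.card_univ, Fintype.card_fin, hv2, e2, hb]; ring
  rw [hsum, hf1, hf2] at hvol
  linarith

lemma copula_lip (d : ℕ) (hd : 2 ≤ d) (C : (Fin d → ℝ) → ℝ) (hC : IsCopula d C)
    (u : Fin d → ℝ) (hu : ∀ i, u i ∈ Set.Icc (0:ℝ) 1) (k : Fin d) {s t : ℝ}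
    (hs : s ∈ Set.Icc (0:ℝ) 1) (ht : t ∈ Set.Icc (0:ℝ) 1) (hst : s ≤ t) :
    C (fun m => if m = k then t else u m) - C (fun m => if m = k then s else u m) ≤ t - s := by
  set V : Finset (Fin d) → ℝ → (Fin d → ℝ) :=
    fun A x m => if m = k then x else if m ∈ A then 1 else u m with hV
  have key : ∀ A : Finset (Fin d),
      C (V ∅ t) - C (V ∅ s) ≤ C (V A t) - C (V A s) := by
    intro A
    induction A using Finset.induction_on with
    | empty => exact le_refl _
    | @insert m A hmA ih =>
      by_cases hmk : m = k
      · subst hmk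
        have hEq : ∀ x : ℝ, V (insert m A) x = V A x := by
          intro x; funext ℓ
          by_cases hlk : ℓ = m
          · simp [hV, hlk]
          · simp [hV, hlk, Finset.mem_insert]
        rw [hEq t, hEq s]
        exact ih
      · set v : Fin d → ℝ := fun ℓ => if ℓ ∈ A then 1 else u ℓ with hv
        have hvin : ∀ ℓ, v ℓ ∈ Set.Icc (0:ℝ) 1 := by
          intro ℓ; simp only [hv]; split
          · exact ⟨zero_le_one, le_refl 1⟩
          · exact hu ℓ
        have hkm : k ≠ m := fun h => hmk h.symm
        have hpair := copula_pair d hd C hC v hvin hkm hs ht (hu m)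
          ⟨zero_le_one, le_refl 1⟩ hst (hu m).2
        have hA : ∀ x : ℝ, (fun ℓ => if ℓ = k then x else if ℓ = m then u m else v ℓ)
            = V A x := by
          intro x; funext ℓ
          by_cases hlk : ℓ = k
          · simp [hV, hlk]
          · by_cases hlm : ℓ = m
            · simp [hV, hlk, hlm, hmA]
            · simp [hV, hv, hlk, hlm]
        have hI : ∀ x : ℝ, (fun ℓ => if ℓ = k then x else if ℓ = m then (1:ℝ) else v ℓ)
            = V (insert m A) x := by
          intro x; funext ℓ
          by_cases hlk : ℓ = k
          · simp [hV, hlk]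
          · by_cases hlm : ℓ = m
            · simp [hV, hlk, hlm]
            · simp [hV, hv, hlk, hlm, Finset.mem_insert]
        rw [hA t, hA s, hI t, hI s] at hpair
        linarith
  have hkey := key Finset.univ
  have hVin : ∀ x ∈ Set.Icc (0:ℝ) 1, ∀ ℓ, V Finset.univ x ℓ ∈ Set.Icc (0:ℝ) 1 := by
    intro x hx ℓ; simp only [hV]; split
    · exact hx
    · split
      · exact ⟨zero_le_one, le_refl 1⟩
      · exact hu ℓ
  have hmarg : ∀ x ∈ Set.Icc (0:ℝ) 1, C (V Finset.univ x) = x := by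
    intro x hx
    have := hC.2.1 (V Finset.univ x) (hVin x hx) k ?_
    · simpa [hV] using this
    · intro ℓ hℓ; simp [hV, hℓ]
  have hE : ∀ x : ℝ, V (∅ : Finset (Fin d)) x = fun m => if m = k then x else u m := by
    intro x; funext ℓ; simp [hV]
  rw [hE t, hE s] at hkey
  rw [hmarg t ht, hmarg s hs] at hkey
  linarith

lemma transposition_bound_aux (d : ℕ) (hd : 2 ≤ d)
    (C : (Fin d → ℝ) → ℝ) (hC : IsCopula d C)
    (u : Fin d → ℝ) (hu : ∀ i, u i ∈ Set.Icc (0:ℝ) 1)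
    (i j : Fin d) (hle : u i ≤ u j) :
    |C u - C (u ∘ Equiv.swap i j)| ≤ |u i - u j| := by
  by_cases hij : i = j
  · subst hij
    simp [Equiv.swap_self]
  · set w : Fin d → ℝ := fun m => if m = j then u i else u m with hw
    have hwin : ∀ m, w m ∈ Set.Icc (0:ℝ) 1 := by
      intro m; simp only [hw]; split
      · exact hu i
      · exact hu m
    have h1 : (fun m => if m = j then u j else u m) = u := by
      funext m; split
      · next h => rw [h]
      · rfl
    -- coordinate j, base u
    have lip1 := copula_lip d hd C hC u hu j (hu i) (hu j) hle
    have mon1 := copula_mono d hd C hC u hu j (hu i) (hu j) hle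
    rw [h1] at lip1 mon1
    -- coordinate i, base w
    have h2 : (fun m => if m = i then u i else w m) = w := by
      funext m; split
      · next h => simp [hw, h, hij]
      · rfl
    have h3 : (fun m => if m = i then u j else w m) = u ∘ Equiv.swap i j := by
      funext m
      by_cases hmi : m = i
      · simp [hmi, Equiv.swap_apply_left]
      · by_cases hmj : m = j
        · simp [hw, hmi, hmj, Equiv.swap_apply_right]
          exact fun h => absurd h (Ne.symm hij)
        · simp [hw, hmi, hmj, Equiv.swap_apply_of_ne_of_ne hmi hmj]
    have lip2 := copula_lip d hd C hC w hwin i (hu i) (hu j) hle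
    have mon2 := copula_mono d hd C hC w hwin i (hu i) (hu j) hle
    rw [h2, h3] at lip2 mon2
    have habs : |u i - u j| = u j - u i := by
      rw [abs_sub_comm]
      exact abs_of_nonneg (sub_nonneg.2 hle)
    rw [habs, abs_sub_le_iff]
    constructor <;> linarith

theorem transposition_bound (d : ℕ) (hd : 2 ≤ d)
    (C : (Fin d → ℝ) → ℝ) (hC : IsCopula d C)
    (u : Fin d → ℝ) (hu : ∀ i, u i ∈ Set.Icc (0:ℝ) 1)
    (i j : Fin d) :
    |C u - C (u ∘ Equiv.swap i j)| ≤ |u i - u j| := by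
  rcases le_total (u i) (u j) with h | h
  · exact transposition_bound_aux d hd C hC u hu i j h
  · have := transposition_bound_aux d hd C hC u hu j i h
    rw [Equiv.swap_comm j i, abs_sub_comm (u j) (u i)] at this
    exact this
end

section
/- Let d ≥ 2, let C be a d-copula, let u ∈ [0,1]^d, and let π ∈ S_d be any permutation of {1,…,d}. Then |C(u) − C(u_π)| ≤ (d−1)/(d+1), where u_π := (u_{π(1)},…,u_{π(d)}). -/
variable {d : ℕ} {C : (Fin d → ℝ) → ℝ}
lemma mono_update (hC : IsCopula d C) (hd : 1 ≤ d)
    (u : Fin d → ℝ) (hu : ∀ i, u i ∈ Set.Icc (0:ℝ) 1) (i : Fin d)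
    {a b : ℝ} (ha : 0 ≤ a) (hab : a ≤ b) (hb : b ≤ 1) :
    C (Function.update u i a) ≤ C (Function.update u i b) := by
  classical
  obtain ⟨hG, hM, hV⟩ := hC
  set A : Fin d → ℝ := fun k => if k = i then a else 0 with hA
  set B : Fin d → ℝ := fun k => if k = i then b else u k with hB
  have hAc : ∀ k, A k ∈ Set.Icc (0:ℝ) 1 := by
    intro k; by_cases h : k = i <;> simp [hA, h, ha, le_trans hab hb]
  have hBc : ∀ k, B k ∈ Set.Icc (0:ℝ) 1 := by
    intro k; by_cases h : k = i <;>
      simp [hB, h, hb, (hu k).1, (hu k).2, le_trans ha hab]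
  have hAB : ∀ k, A k ≤ B k := by
    intro k; by_cases h : k = i <;> simp [hA, hB, h, hab, (hu k).1]
  have h0 := hV A B hAc hBc hAB
  set f : Finset (Fin d) → ℝ :=
    fun S => (-1:ℝ)^(d - S.card) * C (fun k => if k ∈ S then B k else A k) with hf
  have hzero : ∀ S ∈ (Finset.univ : Finset (Finset (Fin d))),
      S ∉ ({Finset.univ, Finset.univ.erase i} : Finset (Finset (Fin d))) → f S = 0 := by
    intro S _ hS
    simp only [Finset.mem_insert, Finset.mem_singleton] at hS
    push_neg at hS
    have hj : ∃ j, j ≠ i ∧ j ∉ S := by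
      by_contra hcon
      push_neg at hcon
      by_cases hiS : i ∈ S
      · apply hS.1
        apply Finset.eq_univ_iff_forall.mpr
        intro j
        by_cases hji : j = i
        · exact hji ▸ hiS
        · exact hcon j hji
      · apply hS.2
        apply Finset.Subset.antisymm
        · intro j hjS
          exact Finset.mem_erase.mpr ⟨fun h => hiS (h ▸ hjS), Finset.mem_univ j⟩
        · intro j hj
          exact hcon j (Finset.mem_erase.mp hj).1
    obtain ⟨j, hji, hjS⟩ := hj
    have hz : C (fun k => if k ∈ S then B k else A k) = 0 := by
      apply hG _ (fun k => by by_cases h : k ∈ S <;> simp [h, hAc k, hBc k])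
      exact ⟨j, by simp [hjS, hA, hji]⟩
    simp [hf, hz]
  have hsum : ∑ S : Finset (Fin d), f S
      = ∑ S ∈ ({Finset.univ, Finset.univ.erase i} : Finset (Finset (Fin d))), f S :=
    (Finset.sum_subset (Finset.subset_univ _) hzero).symm
  have hne : (Finset.univ : Finset (Fin d)) ≠ Finset.univ.erase i := by
    intro h
    have h2 := Finset.mem_univ i
    rw [h] at h2
    exact (Finset.mem_erase.mp h2).1 rfl
  rw [hsum, Finset.sum_pair hne] at h0
  have hc2 : (Finset.univ.erase i).card = d - 1 := by
    rw [Finset.card_erase_of_mem (Finset.mem_univ i)]; simp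
  have hfuniv : f Finset.univ = C (Function.update u i b) := by
    simp only [hf, Finset.card_univ, Fintype.card_fin, Nat.sub_self, pow_zero, one_mul]
    congr 1
    funext k
    by_cases h : k = i <;> simp [h, hB, Function.update_apply]
  have hferase : f (Finset.univ.erase i) = - C (Function.update u i a) := by
    have hpow : d - (Finset.univ.erase i).card = 1 := by rw [hc2]; omega
    simp only [hf, hpow, pow_one, neg_one_mul, neg_inj]
    congr 1
    funext k
    by_cases h : k = i
    · simp [h, hA, Function.update_apply]
    · simp [h, hB, Function.update_apply, Finset.mem_erase]
  rw [hfuniv, hferase] at h0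
  linarith

lemma diff_mono (hC : IsCopula d C) (hd : 2 ≤ d)
    (u : Fin d → ℝ) (hu : ∀ i, u i ∈ Set.Icc (0:ℝ) 1) (i j : Fin d) (hij : j ≠ i)
    {a b : ℝ} (ha : 0 ≤ a) (hab : a ≤ b) (hb : b ≤ 1) :
    C (Function.update u i b) - C (Function.update u i a)
      ≤ C (Function.update (Function.update u j 1) i b)
        - C (Function.update (Function.update u j 1) i a) := by
  classical
  obtain ⟨hG, hM, hV⟩ := hC
  set A : Fin d → ℝ := fun k => if k = i then a else if k = j then u j else 0 with hA
  set B : Fin d → ℝ := fun k => if k = i then b else if k = j then 1 else u k with hB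
  have hAc : ∀ k, A k ∈ Set.Icc (0:ℝ) 1 := by
    intro k
    by_cases h : k = i
    · simp [hA, h, ha, le_trans hab hb]
    · by_cases h' : k = j <;> simp [hA, h, h', hij, hu j]
  have hBc : ∀ k, B k ∈ Set.Icc (0:ℝ) 1 := by
    intro k
    by_cases h : k = i
    · simp [hB, h, hb, le_trans ha hab]
    · by_cases h' : k = j <;> simp [hB, h, h', hij, hu k]
  have hAB : ∀ k, A k ≤ B k := by
    intro k
    by_cases h : k = i
    · simp [hA, hB, h, hab]
    · by_cases h' : k = j <;> simp [hA, hB, h, h', hij, (hu j).2, (hu k).1]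
  have h0 := hV A B hAc hBc hAB
  set f : Finset (Fin d) → ℝ :=
    fun S => (-1:ℝ)^(d - S.card) * C (fun k => if k ∈ S then B k else A k) with hf
  set Sui : Finset (Fin d) := Finset.univ.erase i with hSui
  set Suj : Finset (Fin d) := Finset.univ.erase j with hSuj
  set See : Finset (Fin d) := (Finset.univ.erase i).erase j with hSee
  have hjSui : j ∈ Sui := Finset.mem_erase.mpr ⟨hij, Finset.mem_univ j⟩
  have hiSuj : i ∈ Suj := Finset.mem_erase.mpr ⟨Ne.symm hij, Finset.mem_univ i⟩
  have hiu : i ∉ Sui := fun h => (Finset.mem_erase.mp h).1 rfl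
  have hju : j ∉ Suj := fun h => (Finset.mem_erase.mp h).1 rfl
  have hjee : j ∉ See := fun h => (Finset.mem_erase.mp h).1 rfl
  have hiee : i ∉ See := fun h => (Finset.mem_erase.mp (Finset.mem_erase.mp h).2).1 rfl
  set quad : Finset (Finset (Fin d)) := insert Finset.univ (insert Sui (insert Suj {See})) with hquad
  have hzero : ∀ S ∈ (Finset.univ : Finset (Finset (Fin d))), S ∉ quad → f S = 0 := by
    intro S _ hS
    simp only [hquad, Finset.mem_insert, Finset.mem_singleton] at hS
    push_neg at hS
    have hk : ∃ k, k ≠ i ∧ k ≠ j ∧ k ∉ S := by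
      by_contra hcon
      push_neg at hcon
      by_cases hiS : i ∈ S <;> by_cases hjS : j ∈ S
      · exact hS.1 (Finset.eq_univ_iff_forall.mpr (fun k => by
          by_cases h1 : k = i
          · exact h1 ▸ hiS
          · by_cases h2 : k = j
            · exact h2 ▸ hjS
            · exact hcon k h1 h2))
      · refine hS.2.2.1 (Finset.ext fun k => ?_)
        simp only [hSuj, Finset.mem_erase, Finset.mem_univ, and_true]
        constructor
        · intro hkS h; exact hjS (h ▸ hkS)
        · intro h2
          by_cases h1 : k = i
          · exact h1 ▸ hiS
          · exact hcon k h1 h2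
      · refine hS.2.1 (Finset.ext fun k => ?_)
        simp only [hSui, Finset.mem_erase, Finset.mem_univ, and_true]
        constructor
        · intro hkS h; exact hiS (h ▸ hkS)
        · intro h1
          by_cases h2 : k = j
          · exact h2 ▸ hjS
          · exact hcon k h1 h2
      · refine hS.2.2.2 (Finset.ext fun k => ?_)
        simp only [hSee, Finset.mem_erase, Finset.mem_univ, and_true]
        constructor
        · intro hkS; exact ⟨fun h => hjS (h ▸ hkS), fun h => hiS (h ▸ hkS)⟩
        · intro ⟨h2, h1⟩; exact hcon k h1 h2
    obtain ⟨k0, hk0i, hk0j, hk0S⟩ := hk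
    have hz : C (fun k => if k ∈ S then B k else A k) = 0 := by
      apply hG _ (fun k => by by_cases h : k ∈ S <;> simp [h, hAc k, hBc k])
      exact ⟨k0, by simp [hk0S, hA, hk0i, hk0j]⟩
    simp [hf, hz]
  have hsum : ∑ S : Finset (Fin d), f S = ∑ S ∈ quad, f S :=
    (Finset.sum_subset (Finset.subset_univ _) hzero).symm
  -- distinctness
  have hU1 : (Finset.univ : Finset (Fin d)) ∉ insert Sui (insert Suj ({See} : Finset (Finset (Fin d)))) := by
    simp only [Finset.mem_insert, Finset.mem_singleton]
    push_neg
    refine ⟨fun h => hiu (h ▸ Finset.mem_univ i), fun h => hju (h ▸ Finset.mem_univ j),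
      fun h => hiee (h ▸ Finset.mem_univ i)⟩
  have hU2 : Sui ∉ insert Suj ({See} : Finset (Finset (Fin d))) := by
    simp only [Finset.mem_insert, Finset.mem_singleton]
    push_neg
    exact ⟨fun h => hju (h ▸ hjSui), fun h => hjee (h ▸ hjSui)⟩
  have hU3 : Suj ∉ ({See} : Finset (Finset (Fin d))) := by
    simp only [Finset.mem_singleton]
    exact fun h => hiee (h ▸ hiSuj)
  rw [hsum, hquad, Finset.sum_insert hU1, Finset.sum_insert hU2, Finset.sum_insert hU3,
    Finset.sum_singleton] at h0
  -- cards and signs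
  have hcu : (Finset.univ : Finset (Fin d)).card = d := by simp
  have hcui : Sui.card = d - 1 := by
    rw [hSui, Finset.card_erase_of_mem (Finset.mem_univ i)]; simp
  have hcuj : Suj.card = d - 1 := by
    rw [hSuj, Finset.card_erase_of_mem (Finset.mem_univ j)]; simp
  have hcee : See.card = d - 2 := by
    rw [hSee, Finset.card_erase_of_mem hjSui, hcui]; omega
  -- evaluate the four terms
  have t1 : f Finset.univ = C (Function.update (Function.update u j 1) i b) := by
    simp only [hf, hcu, Nat.sub_self, pow_zero, one_mul]
    congr 1
    funext k
    by_cases h : k = i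
    · simp [h, hB, Function.update_apply, Ne.symm hij]
    · by_cases h' : k = j <;> simp [h, h', hB, Function.update_apply]
  have t2 : f Sui = - C (Function.update (Function.update u j 1) i a) := by
    have hpow : d - Sui.card = 1 := by rw [hcui]; omega
    simp only [hf, hpow, pow_one, neg_one_mul, neg_inj]
    congr 1
    funext k
    by_cases h : k = i
    · simp [h, hA, hiu, Function.update_apply, Ne.symm hij]
    · have hk : k ∈ Sui := Finset.mem_erase.mpr ⟨h, Finset.mem_univ k⟩
      by_cases h' : k = j <;>
        simp [hk, h, h', hij, hjSui, hB, Function.update_apply]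
  have t3 : f Suj = - C (Function.update u i b) := by
    have hpow : d - Suj.card = 1 := by rw [hcuj]; omega
    simp only [hf, hpow, pow_one, neg_one_mul, neg_inj]
    congr 1
    funext k
    by_cases h' : k = j
    · simp [h', hju, hA, Function.update_apply, hij]
    · have hk : k ∈ Suj := Finset.mem_erase.mpr ⟨h', Finset.mem_univ k⟩
      by_cases h : k = i <;>
        simp [hk, h, h', hiSuj, hB, Function.update_apply]
  have t4 : f See = C (Function.update u i a) := by
    have hpow : d - See.card = 2 := by rw [hcee]; omega
    simp only [hf, hpow, neg_one_sq, one_mul]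
    congr 1
    funext k
    by_cases h : k = i
    · simp [h, hiee, hA, Function.update_apply]
    · by_cases h' : k = j
      · simp [h, h', hjee, hA, Function.update_apply, hij]
      · have : k ∈ See := Finset.mem_erase.mpr ⟨h', Finset.mem_erase.mpr ⟨h, Finset.mem_univ k⟩⟩
        simp [this, h, h', hB, Function.update_apply]
  rw [t1, t2, t3, t4] at h0
  linarith

lemma lipschitz_update (hC : IsCopula d C) (hd : 2 ≤ d)
    (u : Fin d → ℝ) (hu : ∀ i, u i ∈ Set.Icc (0:ℝ) 1) (i : Fin d)
    {a b : ℝ} (ha : 0 ≤ a) (hab : a ≤ b) (hb : b ≤ 1) :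
    C (Function.update u i b) - C (Function.update u i a) ≤ b - a := by
  classical
  have key : ∀ s : Finset (Fin d), i ∉ s →
      C (Function.update u i b) - C (Function.update u i a)
        ≤ C (Function.update (fun k => if k ∈ s then 1 else u k) i b)
          - C (Function.update (fun k => if k ∈ s then 1 else u k) i a) := by
    intro s
    induction s using Finset.induction_on with
    | empty => intro _; simp
    | @insert j s hjs ih =>
      intro hins
      have hji : j ≠ i := fun h => hins (by simp [h])
      have his : i ∉ s := fun h => hins (Finset.mem_insert_of_mem h)
      have hcube : ∀ k, (fun k => if k ∈ s then 1 else u k) k ∈ Set.Icc (0:ℝ) 1 := by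
        intro k; by_cases h : k ∈ s <;> simp [h, hu k]
      have step := diff_mono hC hd (fun k => if k ∈ s then 1 else u k) hcube i j hji ha hab hb
      have heq : Function.update (fun k => if k ∈ s then 1 else u k) j 1
          = fun k => if k ∈ insert j s then 1 else u k := by
        funext k
        by_cases h : k = j <;> simp [Function.update_apply, h, Finset.mem_insert]
      rw [heq] at step
      exact le_trans (ih his) step
  have h1 := key (Finset.univ.erase i) (fun h => (Finset.mem_erase.mp h).1 rfl)
  set v : Fin d → ℝ := fun k => if k ∈ Finset.univ.erase i then 1 else u k with hv
  have hmargin : ∀ c : ℝ, 0 ≤ c → c ≤ 1 → C (Function.update v i c) = c := by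
    intro c hc0 hc1
    have hcube : ∀ k, Function.update v i c k ∈ Set.Icc (0:ℝ) 1 := by
      intro k
      by_cases h : k = i
      · simp [Function.update_apply, h, hc0, hc1]
      · simp [Function.update_apply, h, hv, Finset.mem_erase]
    have h2 := hC.2.1 (Function.update v i c) hcube i ?_
    · rw [h2, Function.update_self]
    · intro k hk
      simp [Function.update_apply, hk, hv, Finset.mem_erase]
  rw [hmargin a ha (hab.trans hb), hmargin b (ha.trans hab) hb] at h1
  exact h1

lemma mono_full (hC : IsCopula d C) (hd : 2 ≤ d)
    (a b : Fin d → ℝ) (hac : ∀ i, a i ∈ Set.Icc (0:ℝ) 1)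
    (hbc : ∀ i, b i ∈ Set.Icc (0:ℝ) 1) (hab : ∀ k, a k ≤ b k) :
    C a ≤ C b := by
  classical
  have key : ∀ s : Finset (Fin d), C (fun k => if k ∈ s then a k else b k) ≤ C b := by
    intro s
    induction s using Finset.induction_on with
    | empty => simp
    | @insert j s hjs ih =>
      have hcube : ∀ k, (fun k => if k ∈ s then a k else b k) k ∈ Set.Icc (0:ℝ) 1 := by
        intro k; by_cases h : k ∈ s <;> simp [h, hac k, hbc k]
      have step := mono_update hC (by omega) (fun k => if k ∈ s then a k else b k) hcube j
        (hac j).1 (hab j) (hbc j).2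
      have e1 : Function.update (fun k => if k ∈ s then a k else b k) j (a j)
          = fun k => if k ∈ insert j s then a k else b k := by
        funext k
        by_cases h : k = j <;> simp [Function.update_apply, h, Finset.mem_insert]
      have e2 : Function.update (fun k => if k ∈ s then a k else b k) j (b j)
          = fun k => if k ∈ s then a k else b k := by
        funext k
        by_cases h : k = j <;> simp [Function.update_apply, h, hjs]
      rw [e1, e2] at step
      exact step.trans ih
  have h1 := key Finset.univ
  simpa using h1

lemma lipschitz_full (hC : IsCopula d C) (hd : 2 ≤ d)
    (a b : Fin d → ℝ) (hac : ∀ i, a i ∈ Set.Icc (0:ℝ) 1)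
    (hbc : ∀ i, b i ∈ Set.Icc (0:ℝ) 1) (hab : ∀ k, a k ≤ b k) :
    C b - C a ≤ ∑ k, (b k - a k) := by
  classical
  have key : ∀ s : Finset (Fin d),
      C b - C (fun k => if k ∈ s then a k else b k) ≤ ∑ k ∈ s, (b k - a k) := by
    intro s
    induction s using Finset.induction_on with
    | empty => simp
    | @insert j s hjs ih =>
      have hcube : ∀ k, (fun k => if k ∈ s then a k else b k) k ∈ Set.Icc (0:ℝ) 1 := by
        intro k; by_cases h : k ∈ s <;> simp [h, hac k, hbc k]
      have step := lipschitz_update hC hd (fun k => if k ∈ s then a k else b k) hcube j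
        (hac j).1 (hab j) (hbc j).2
      have e1 : Function.update (fun k => if k ∈ s then a k else b k) j (a j)
          = fun k => if k ∈ insert j s then a k else b k := by
        funext k
        by_cases h : k = j <;> simp [Function.update_apply, h, Finset.mem_insert]
      have e2 : Function.update (fun k => if k ∈ s then a k else b k) j (b j)
          = fun k => if k ∈ s then a k else b k := by
        funext k
        by_cases h : k = j <;> simp [Function.update_apply, h, hjs]
      rw [e1, e2] at step
      rw [Finset.sum_insert hjs]
      linarith
  have h1 := key Finset.univ
  have e3 : (fun k => if k ∈ Finset.univ then a k else b k) = a := by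
    funext k; simp
  rw [e3] at h1
  exact h1

lemma frechet_upper (hC : IsCopula d C) (hd : 2 ≤ d)
    (u : Fin d → ℝ) (hu : ∀ i, u i ∈ Set.Icc (0:ℝ) 1) (i : Fin d) :
    C u ≤ u i := by
  classical
  set w : Fin d → ℝ := fun k => if k = i then u i else 1 with hw
  have hwc : ∀ k, w k ∈ Set.Icc (0:ℝ) 1 := by
    intro k; by_cases h : k = i <;> simp [hw, h, hu i]
  have h1 : C u ≤ C w := by
    apply mono_full hC hd u w hu hwc
    intro k; by_cases h : k = i <;> simp [hw, h, (hu k).2]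
  have h2 : C w = u i := by
    have := hC.2.1 w hwc i (fun j hj => by simp [hw, hj])
    simpa [hw] using this
  linarith

lemma frechet_lower (hC : IsCopula d C) (hd : 2 ≤ d)
    (u : Fin d → ℝ) (hu : ∀ i, u i ∈ Set.Icc (0:ℝ) 1) :
    (∑ k, u k) - ((d : ℝ) - 1) ≤ C u := by
  classical
  have hne : Nonempty (Fin d) := ⟨⟨0, by omega⟩⟩
  have h1 := lipschitz_full hC hd u (fun _ => 1) hu (by simp) (fun k => (hu k).2)
  have hCone : C (fun _ => (1:ℝ)) = 1 := by
    have := hC.2.1 (fun _ => (1:ℝ)) (by simp) (Classical.arbitrary (Fin d)) (fun j _ => rfl)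
    simpa using this
  rw [hCone] at h1
  have h2 : ∑ k : Fin d, ((1:ℝ) - u k) = (d:ℝ) - ∑ k, u k := by
    rw [Finset.sum_sub_distrib]
    simp
  rw [h2] at h1
  linarith

lemma copula_nonneg (hC : IsCopula d C) (hd : 2 ≤ d)
    (u : Fin d → ℝ) (hu : ∀ i, u i ∈ Set.Icc (0:ℝ) 1) :
    0 ≤ C u := by
  classical
  set i0 : Fin d := ⟨0, by omega⟩
  have h1 : C (Function.update u i0 0) ≤ C u := by
    have := mono_update hC (by omega) u hu i0 (le_refl (0:ℝ)) (hu i0).1 (hu i0).2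
    rwa [Function.update_eq_self] at this
  have h2 : C (Function.update u i0 0) = 0 := by
    apply hC.1
    · intro k
      by_cases h : k = i0 <;> simp [Function.update_apply, h, hu k]
    · exact ⟨i0, Function.update_self _ _ _⟩
  linarith

theorem main_bound (d : ℕ) (hd : 2 ≤ d)
    (C : (Fin d → ℝ) → ℝ) (hC : IsCopula d C)
    (u : Fin d → ℝ) (hu : ∀ i, u i ∈ Set.Icc (0:ℝ) 1)
    (π : Equiv.Perm (Fin d)) :
    |C u - C (u ∘ π)| ≤ ((d : ℝ) - 1) / ((d : ℝ) + 1) := by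
  classical
  have hdR : (2:ℝ) ≤ (d:ℝ) := by exact_mod_cast hd
  set c : ℝ := ((d : ℝ) - 1) / ((d : ℝ) + 1) with hc
  have hdpos : (0:ℝ) < (d:ℝ) + 1 := by linarith
  have hcid : c * ((d:ℝ) + 1) = (d:ℝ) - 1 := by
    rw [hc, div_mul_cancel₀]
    exact ne_of_gt hdpos
  have hc0 : 0 ≤ c := div_nonneg (by linarith) (le_of_lt hdpos)
  -- min of u
  obtain ⟨i0, -, hmin⟩ :=
    Finset.exists_min_image Finset.univ u ⟨⟨0, by omega⟩, Finset.mem_univ _⟩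
  have hmin' : ∀ k, u i0 ≤ u k := fun k => hmin k (Finset.mem_univ k)
  have hup : ∀ i, (u ∘ π) i ∈ Set.Icc (0:ℝ) 1 := fun i => hu (π i)
  -- w = componentwise min
  set w : Fin d → ℝ := fun k => min (u k) (u (π k)) with hw
  have hwc : ∀ k, w k ∈ Set.Icc (0:ℝ) 1 := by
    intro k
    exact ⟨le_min (hu k).1 (hu (π k)).1, min_le_of_left_le (hu k).2⟩
  have hw1 : ∀ k, w k ≤ u k := fun k => min_le_left _ _
  have hw2 : ∀ k, w k ≤ (u ∘ π) k := fun k => min_le_right _ _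
  have lip1 : C u - C w ≤ ∑ k, (u k - w k) :=
    lipschitz_full hC hd w u hwc hu hw1
  have lip2 : C (u ∘ π) - C w ≤ ∑ k, ((u ∘ π) k - w k) :=
    lipschitz_full hC hd w (u ∘ π) hwc hup hw2
  have mono1 : C w ≤ C u := mono_full hC hd w u hwc hu hw1
  have mono2 : C w ≤ C (u ∘ π) := mono_full hC hd w (u ∘ π) hwc hup hw2
  have hsum_eq : ∑ k, u k = ∑ k, (u ∘ π) k := (Equiv.sum_comp π u).symm
  have hTs : ∑ k, (u k - w k) = ∑ k, ((u ∘ π) k - w k) := by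
    rw [Finset.sum_sub_distrib, Finset.sum_sub_distrib, hsum_eq]
  have lip2' : C (u ∘ π) - C w ≤ ∑ k, (u k - w k) := by
    rw [hTs]; exact lip2
  have habsT : |C u - C (u ∘ π)| ≤ ∑ k, (u k - w k) := by
    rw [abs_le]
    constructor
    · linarith
    · linarith
  -- Fréchet bounds
  have hCu_le : C u ≤ u i0 := frechet_upper hC hd u hu i0
  have hCup_le : C (u ∘ π) ≤ u i0 := by
    have := frechet_upper hC hd (u ∘ π) hup (π.symm i0)
    simpa using this
  set A : ℝ := max ((∑ k, u k) - ((d:ℝ) - 1)) 0 with hA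
  have hA0 : 0 ≤ A := le_max_right _ _
  have hAs : (∑ k, u k) - ((d:ℝ) - 1) ≤ A := le_max_left _ _
  have hCu_ge : A ≤ C u :=
    max_le (frechet_lower hC hd u hu) (copula_nonneg hC hd u hu)
  have hCup_ge : A ≤ C (u ∘ π) := by
    apply max_le
    · have := frechet_lower hC hd (u ∘ π) hup
      rwa [← hsum_eq] at this
    · exact copula_nonneg hC hd (u ∘ π) hup
  by_cases hcase : u i0 - A ≤ c
  · rw [abs_le]
    constructor <;> linarith
  · push_neg at hcase
    have hm : c < u i0 := by linarith
    have hTbound : (∑ k, (u k - w k)) ≤ (∑ k, u k) - (d:ℝ) * u i0 := by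
      have : ∀ k ∈ Finset.univ, u k - w k ≤ u k - u i0 := by
        intro k _
        have : u i0 ≤ w k := le_min (hmin' k) (hmin' (π k))
        linarith
      calc ∑ k, (u k - w k) ≤ ∑ k, (u k - u i0) := Finset.sum_le_sum this
        _ = (∑ k, u k) - (d:ℝ) * u i0 := by
            rw [Finset.sum_sub_distrib]
            simp [mul_comm]
    have hsub : (∑ k, u k) < u i0 - c + ((d:ℝ) - 1) := by linarith
    have hprod : ((d:ℝ) - 1) * c ≤ ((d:ℝ) - 1) * u i0 :=
      mul_le_mul_of_nonneg_left (le_of_lt hm) (by linarith)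
    have hTc : (∑ k, (u k - w k)) ≤ c := by nlinarith
    linarith
end

section
/- Let d ≥ 2, let C be a d-copula, let u ∈ [0,1]^d, and let π ∈ S_d. Writing u_{(1)} := min{u_1,…,u_d}, one has |C(u) − C(u_π)| ≤ min{ u_1, …, u_d, Σ_{i=1}^d (u_i − u_{(1)}), (d−1) + u_{(1)} − Σ_{i=1}^d u_i }. -/
open Finset

lemma mobius_aux {α : Type*} [DecidableEq α] (U : Finset α) (f : Finset α → ℝ) :
    ∑ W ∈ U.powerset, ∑ T ∈ W.powerset, (-1:ℝ)^(W.card - T.card) * f T = f U := by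
  classical
  induction U using Finset.induction_on generalizing f with
  | empty => simp
  | insert _ _ ha ih =>
    rename_i a U
    rw [Finset.sum_powerset_insert ha]
    have key : ∀ W ∈ U.powerset,
        (∑ T ∈ W.powerset, (-1:ℝ)^(W.card - T.card) * f T)
          + ∑ T ∈ (insert a W).powerset, (-1:ℝ)^((insert a W).card - T.card) * f T
        = ∑ T ∈ W.powerset, (-1:ℝ)^(W.card - T.card) * f (insert a T) := by
      intro W hW
      have haW : a ∉ W := fun h => ha (Finset.mem_powerset.mp hW h)
      rw [Finset.sum_powerset_insert haW, Finset.card_insert_of_notMem haW]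
      have h1 : ∀ T ∈ W.powerset, (-1:ℝ)^(W.card + 1 - T.card) * f T
          = -((-1:ℝ)^(W.card - T.card) * f T) := by
        intro T hT
        have : T.card ≤ W.card := Finset.card_le_card (Finset.mem_powerset.mp hT)
        have : W.card + 1 - T.card = (W.card - T.card) + 1 := by omega
        rw [this, pow_succ]; ring
      have h2 : ∀ T ∈ W.powerset, (-1:ℝ)^(W.card + 1 - (insert a T).card) * f (insert a T)
          = (-1:ℝ)^(W.card - T.card) * f (insert a T) := by
        intro T hT
        have haT : a ∉ T := fun h => haW (Finset.mem_powerset.mp hT h)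
        have hc : T.card ≤ W.card := Finset.card_le_card (Finset.mem_powerset.mp hT)
        rw [Finset.card_insert_of_notMem haT]
        have he : W.card + 1 - (T.card + 1) = W.card - T.card := by omega
        rw [he]
      rw [Finset.sum_congr rfl h1, Finset.sum_congr rfl h2, Finset.sum_neg_distrib]
      ring
    rw [← Finset.sum_add_distrib, Finset.sum_congr rfl key, ih (fun T => f (insert a T))]

lemma mono_coord {d : ℕ} {C : (Fin d → ℝ) → ℝ} (hC : IsCopula d C) (hd : 1 ≤ d)
    (v : Fin d → ℝ) (hv : ∀ k, v k ∈ Set.Icc (0:ℝ) 1) (i : Fin d) (a : ℝ)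
    (ha : 0 ≤ a) (hav : a ≤ v i) :
    C (Function.update v i a) ≤ C v := by
  classical
  set lo : Fin d → ℝ := fun k => if k = i then a else 0 with hlo
  have hlocube : ∀ k, lo k ∈ Set.Icc (0:ℝ) 1 := by
    intro k; simp only [hlo]
    split
    · exact ⟨ha, hav.trans (hv i).2⟩
    · exact ⟨le_refl _, zero_le_one⟩
  have hle : ∀ k, lo k ≤ v k := by
    intro k; simp only [hlo]; split
    · next h => rw [h]; exact hav
    · exact (hv k).1
  have key := hC.2.2 lo v hlocube hv hle
  set f : Finset (Fin d) → ℝ :=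
    fun S => (-1:ℝ)^(d - S.card) * C (fun k => if k ∈ S then v k else lo k) with hf
  have hvanish : ∀ S : Finset (Fin d), S ≠ Finset.univ → S ≠ Finset.univ.erase i → f S = 0 := by
    intro S hS1 hS2
    have hcube : ∀ k, (if k ∈ S then v k else lo k) ∈ Set.Icc (0:ℝ) 1 := by
      intro k; split
      · exact hv k
      · exact hlocube k
    have hzero : ∃ k, (if k ∈ S then v k else lo k) = 0 := by
      by_cases hi : i ∈ S
      · obtain ⟨k, hk⟩ : ∃ k, k ∉ S := by
          by_contra h; push_neg at h
          exact hS1 (Finset.eq_univ_iff_forall.mpr h)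
        refine ⟨k, ?_⟩
        have hki : k ≠ i := fun h => hk (h ▸ hi)
        simp [hk, hlo, hki]
      · have hsub : S ⊆ Finset.univ.erase i := by
          intro k hk
          exact Finset.mem_erase.mpr ⟨fun h => hi (h ▸ hk), Finset.mem_univ _⟩
        obtain ⟨k, hk1, hk2⟩ := Finset.exists_of_ssubset (hsub.ssubset_of_ne hS2)
        refine ⟨k, ?_⟩
        have hki : k ≠ i := (Finset.mem_erase.mp hk1).1
        simp [hk2, hlo, hki]
    have := hC.1 _ hcube hzero
    simp [hf, this]
  have hsum : ∑ S : Finset (Fin d), f S = f Finset.univ + f (Finset.univ.erase i) := by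
    rw [← Finset.sum_pair (a := (Finset.univ : Finset (Fin d))) (b := Finset.univ.erase i)]
    · symm
      apply Finset.sum_subset (Finset.subset_univ _)
      intro S _ hS
      simp only [Finset.mem_insert, Finset.mem_singleton] at hS
      push_neg at hS
      exact hvanish S hS.1 hS.2
    · intro h
      have : i ∈ Finset.univ.erase i := h ▸ Finset.mem_univ i
      exact (Finset.mem_erase.mp this).1 rfl
  have hfu : f Finset.univ = C v := by
    simp [hf, Finset.card_univ]
  have hfe : f (Finset.univ.erase i) = -C (Function.update v i a) := by
    have hcard : (Finset.univ.erase i).card = d - 1 := by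
      rw [Finset.card_erase_of_mem (Finset.mem_univ _), Finset.card_univ, Fintype.card_fin]
    have hexp : d - (d - 1) = 1 := by omega
    have hfun : (fun k => if k ∈ Finset.univ.erase i then v k else lo k)
        = Function.update v i a := by
      funext k
      by_cases hk : k = i
      · subst hk; simp [hlo]
      · simp [Finset.mem_erase, hk, Function.update_apply, hlo]
    simp only [hf]
    rw [hcard, hexp, hfun, pow_one, neg_one_mul]
  rw [hsum, hfu, hfe] at key
  linarith

lemma lip_coord {d : ℕ} {C : (Fin d → ℝ) → ℝ} (hC : IsCopula d C) (hd : 1 ≤ d)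
    (v : Fin d → ℝ) (hv : ∀ k, v k ∈ Set.Icc (0:ℝ) 1) (i : Fin d) (a : ℝ)
    (ha : 0 ≤ a) (hav : a ≤ v i) :
    C v - C (Function.update v i a) ≤ v i - a := by
  classical
  set U : Finset (Fin d) := Finset.univ.erase i with hU
  have hUcard : U.card = d - 1 := by
    rw [hU, Finset.card_erase_of_mem (Finset.mem_univ _), Finset.card_univ, Fintype.card_fin]
  have hiU : i ∉ U := fun h => (Finset.mem_erase.mp h).1 rfl
  have hmemU : ∀ k : Fin d, k ≠ i → k ∈ U := fun k hk =>
    Finset.mem_erase.mpr ⟨hk, Finset.mem_univ _⟩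
  set g : Finset (Fin d) → ℝ → (Fin d → ℝ) :=
    fun T t k => if k = i then t else if k ∈ T then 1 else v k with hg
  set φ : Finset (Fin d) → ℝ := fun T => C (g T (v i)) - C (g T a) with hφ
  have hacube : a ∈ Set.Icc (0:ℝ) 1 := ⟨ha, hav.trans (hv i).2⟩
  -- each inner signed sum is nonnegative
  have hVpos : ∀ W ∈ U.powerset,
      0 ≤ ∑ T ∈ W.powerset, (-1:ℝ)^(W.card - T.card) * φ T := by
    intro W hW
    have hWU : W ⊆ U := Finset.mem_powerset.mp hW
    have hiW : i ∉ W := fun h => hiU (hWU h)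
    have hWcard : W.card ≤ d - 1 := hUcard ▸ Finset.card_le_card hWU
    set lo : Fin d → ℝ := fun k => if k = i then a else if k ∈ W then v k else 0 with hlo
    set hi : Fin d → ℝ := fun k => if k = i then v i else if k ∈ W then 1 else v k with hhi
    have hlocube : ∀ k, lo k ∈ Set.Icc (0:ℝ) 1 := by
      intro k; simp only [hlo]
      split
      · exact hacube
      · split
        · exact hv k
        · exact ⟨le_refl _, zero_le_one⟩
    have hhicube : ∀ k, hi k ∈ Set.Icc (0:ℝ) 1 := by
      intro k; simp only [hhi]
      split
      · exact hv i
      · split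
        · exact ⟨zero_le_one, le_refl 1⟩
        · exact hv k
    have hlohi : ∀ k, lo k ≤ hi k := by
      intro k; simp only [hlo, hhi]
      split
      · exact hav
      · split
        · exact (hv k).2
        · exact (hv k).1
    have key := hC.2.2 lo hi hlocube hhicube hlohi
    set c : Finset (Fin d) → (Fin d → ℝ) := fun S k => if k ∈ S then hi k else lo k with hc
    set f : Finset (Fin d) → ℝ := fun S => (-1:ℝ)^(d - S.card) * C (c S) with hf
    have hccube : ∀ S, ∀ k, c S k ∈ Set.Icc (0:ℝ) 1 := by
      intro S k; simp only [hc]; split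
      · exact hhicube k
      · exact hlocube k
    -- Step A : kill terms not containing U \ W
    have hstepA : ∑ S : Finset (Fin d), f S
        = ∑ S ∈ Finset.univ.filter (fun S : Finset (Fin d) => U \ W ⊆ S), f S := by
      symm
      apply Finset.sum_subset (Finset.filter_subset _ _)
      intro S _ hS
      simp only [Finset.mem_filter, Finset.mem_univ, true_and] at hS
      obtain ⟨k, hk1, hk2⟩ := Finset.not_subset.mp hS
      have hki : k ≠ i := (Finset.mem_erase.mp (Finset.mem_sdiff.mp hk1).1).1
      have hkW : k ∉ W := (Finset.mem_sdiff.mp hk1).2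
      have hzero : ∃ m, c S m = 0 := by
        refine ⟨k, ?_⟩
        simp [hc, hk2, hlo, hki, hkW]
      have := hC.1 (c S) (hccube S) hzero
      simp [hf, this]
    -- the reduced corner function
    set cc : Finset (Fin d) → (Fin d → ℝ) := fun R k =>
      if k = i then (if i ∈ R then v i else a)
      else if k ∈ W then (if k ∈ R then 1 else v k) else v k with hcc
    set h : Finset (Fin d) → ℝ := fun R => (-1:ℝ)^(W.card + 1 - R.card) * C (cc R) with hh
    -- Step B : reindex
    have hstepB : ∑ S ∈ Finset.univ.filter (fun S : Finset (Fin d) => U \ W ⊆ S), f S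
        = ∑ R ∈ (insert i W).powerset, h R := by
      apply Finset.sum_nbij' (fun S => S ∩ insert i W) (fun R => R ∪ (U \ W))
      · intro S _
        exact Finset.mem_powerset.mpr Finset.inter_subset_right
      · intro R _
        simp only [Finset.mem_filter, Finset.mem_univ, true_and]
        exact Finset.subset_union_right
      · intro S hS
        simp only [Finset.mem_filter, Finset.mem_univ, true_and] at hS
        ext k
        simp only [Finset.mem_union, Finset.mem_inter, Finset.mem_insert, Finset.mem_sdiff]
        constructor
        · rintro (⟨hk, _⟩ | hk)
          · exact hk
          · exact hS (Finset.mem_sdiff.mpr hk)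
        · intro hk
          by_cases h1 : k = i ∨ k ∈ W
          · exact Or.inl ⟨hk, h1⟩
          · push_neg at h1
            exact Or.inr ⟨hmemU k h1.1, h1.2⟩
      · intro R hR
        have hRsub := Finset.mem_powerset.mp hR
        ext k
        simp only [Finset.mem_inter, Finset.mem_union, Finset.mem_sdiff]
        constructor
        · rintro ⟨hk1 | hk1, hk2⟩
          · exact hk1
          · exfalso
            rcases Finset.mem_insert.mp hk2 with h1 | h1
            · exact (Finset.mem_erase.mp hk1.1).1 h1
            · exact hk1.2 h1
        · intro hk
          exact ⟨Or.inl hk, hRsub hk⟩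
      · intro S hS
        simp only [Finset.mem_filter, Finset.mem_univ, true_and] at hS
        have hdisj : Disjoint (S ∩ insert i W) (U \ W) := by
          rw [Finset.disjoint_left]
          intro k hk1 hk2
          rcases Finset.mem_insert.mp (Finset.mem_inter.mp hk1).2 with h1 | h1
          · exact (Finset.mem_erase.mp (Finset.mem_sdiff.mp hk2).1).1 h1
          · exact (Finset.mem_sdiff.mp hk2).2 h1
        have hSeq : (S ∩ insert i W) ∪ (U \ W) = S := by
          ext k
          simp only [Finset.mem_union, Finset.mem_inter, Finset.mem_insert, Finset.mem_sdiff]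
          constructor
          · rintro (⟨hk, _⟩ | hk)
            · exact hk
            · exact hS (Finset.mem_sdiff.mpr hk)
          · intro hk
            by_cases h1 : k = i ∨ k ∈ W
            · exact Or.inl ⟨hk, h1⟩
            · push_neg at h1
              exact Or.inr ⟨hmemU k h1.1, h1.2⟩
        have hScard : S.card = (S ∩ insert i W).card + (U \ W).card := by
          conv_lhs => rw [← hSeq]
          exact Finset.card_union_of_disjoint hdisj
        have hUW : (U \ W).card = d - 1 - W.card := by
          rw [Finset.card_sdiff_of_subset hWU, hUcard]
        have hRle : (S ∩ insert i W).card ≤ W.card + 1 := by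
          calc (S ∩ insert i W).card ≤ (insert i W).card :=
                Finset.card_le_card Finset.inter_subset_right
          _ = W.card + 1 := Finset.card_insert_of_notMem hiW
        have hexp : d - S.card = W.card + 1 - (S ∩ insert i W).card := by
          rw [hScard, hUW]; omega
        have hfun : c S = cc (S ∩ insert i W) := by
          funext k
          by_cases hki : k = i
          · by_cases hkS : k ∈ S
            · have hiS : i ∈ S := hki ▸ hkS
              have hmm : i ∈ S ∩ insert i W :=
                Finset.mem_inter.mpr ⟨hiS, Finset.mem_insert_self _ _⟩
              simp [hc, hcc, hki, hkS, hhi, hiS, hmm]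
            · have hiS : i ∉ S := fun h => hkS (hki ▸ h)
              have hmm : i ∉ S ∩ insert i W := fun h => hiS (Finset.mem_inter.mp h).1
              simp [hc, hcc, hki, hkS, hlo, hiS, hmm]
          · by_cases hkW : k ∈ W
            · have hmem : k ∈ insert i W := Finset.mem_insert_of_mem hkW
              by_cases hkS : k ∈ S
              · have hmm : k ∈ S ∩ insert i W := Finset.mem_inter.mpr ⟨hkS, hmem⟩
                simp [hc, hcc, hkS, hhi, hki, hkW, hmm]
              · have hmm : k ∉ S ∩ insert i W := fun h => hkS (Finset.mem_inter.mp h).1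
                simp [hc, hcc, hkS, hlo, hki, hkW, hmm]
            · have hkS : k ∈ S := hS (Finset.mem_sdiff.mpr ⟨hmemU k hki, hkW⟩)
              simp [hc, hcc, hkS, hhi, hki, hkW]
        simp only [hf, hh]
        rw [hexp, hfun]
    -- Step C/D : split the powerset of `insert i W` and pair up terms
    have hstepC : ∑ R ∈ (insert i W).powerset, h R
        = ∑ T ∈ W.powerset, (-1:ℝ)^(W.card - T.card) * φ T := by
      rw [Finset.sum_powerset_insert hiW, ← Finset.sum_add_distrib]
      apply Finset.sum_congr rfl
      intro T hT
      have hTW : T ⊆ W := Finset.mem_powerset.mp hT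
      have hiT : i ∉ T := fun h => hiW (hTW h)
      have hTc : T.card ≤ W.card := Finset.card_le_card hTW
      have hcc1 : cc T = g T a := by
        funext k
        by_cases hki : k = i
        · simp [hcc, hg, hki, hiT]
        · by_cases hkW : k ∈ W
          · simp [hcc, hg, hki, hkW]
          · have hkT : k ∉ T := fun h => hkW (hTW h)
            simp [hcc, hg, hki, hkW, hkT]
      have hcc2 : cc (insert i T) = g T (v i) := by
        funext k
        by_cases hki : k = i
        · simp [hcc, hg, hki]
        · by_cases hkW : k ∈ W
          · simp [hcc, hg, hki, hkW, Finset.mem_insert, hki]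
          · have hkT : k ∉ T := fun h => hkW (hTW h)
            simp [hcc, hg, hki, hkW, hkT, Finset.mem_insert]
      have hcard : (insert i T).card = T.card + 1 := Finset.card_insert_of_notMem hiT
      have he1 : W.card + 1 - T.card = (W.card - T.card) + 1 := by omega
      have he2 : W.card + 1 - (insert i T).card = W.card - T.card := by rw [hcard]; omega
      simp only [hh, hφ]
      rw [hcc1, hcc2, he1, he2, pow_succ]
      ring
    rw [hstepA, hstepB, hstepC] at key
    exact key
  -- assemble
  have hmob := mobius_aux U φ
  have hφU : φ U = v i - a := by
    have hval : ∀ t : ℝ, t ∈ Set.Icc (0:ℝ) 1 → C (g U t) = t := by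
      intro t ht
      have hcube : ∀ k, g U t k ∈ Set.Icc (0:ℝ) 1 := by
        intro k; simp only [hg]
        split
        · exact ht
        · split
          · exact ⟨zero_le_one, le_refl 1⟩
          · exact hv k
      have hmargin := hC.2.1 (g U t) hcube i (by
        intro j hj
        simp [hg, hj, hmemU j hj])
      rw [hmargin]
      simp [hg]
    simp only [hφ]
    rw [hval (v i) (hv i), hval a hacube]
  have hφempty : φ ∅ = C v - C (Function.update v i a) := by
    have h1 : g ∅ (v i) = v := by
      funext k
      by_cases hk : k = i
      · simp [hg, hk]
      · simp [hg, hk]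
    have h2 : g ∅ a = Function.update v i a := by
      funext k
      by_cases hk : k = i
      · simp [hg, hk, Function.update_apply]
      · simp [hg, hk, Function.update_apply]
    simp only [hφ]
    rw [h1, h2]
  have hsingle : φ ∅ ≤ ∑ W ∈ U.powerset, ∑ T ∈ W.powerset, (-1:ℝ)^(W.card - T.card) * φ T := by
    have hmem : (∅ : Finset (Fin d)) ∈ U.powerset := Finset.empty_mem_powerset _
    have := Finset.single_le_sum (f := fun W : Finset (Fin d) =>
      ∑ T ∈ W.powerset, (-1:ℝ)^(W.card - T.card) * φ T) hVpos hmem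
    simpa using this
  rw [hmob] at hsingle
  rw [hφempty, hφU] at hsingle
  exact hsingle

lemma copula_mono_s2 {d : ℕ} {C : (Fin d → ℝ) → ℝ} (hC : IsCopula d C) (hd : 1 ≤ d)
    (a b : Fin d → ℝ) (ha : ∀ k, a k ∈ Set.Icc (0:ℝ) 1) (hb : ∀ k, b k ∈ Set.Icc (0:ℝ) 1)
    (hab : ∀ k, a k ≤ b k) : C a ≤ C b := by
  classical
  have key : ∀ s : Finset (Fin d), C (fun k => if k ∈ s then a k else b k) ≤ C b := by
    intro s
    induction s using Finset.induction_on with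
    | empty => simp
    | insert _ _ hins ih =>
      rename_i i s
      have hw : ∀ k, (if k ∈ s then a k else b k) ∈ Set.Icc (0:ℝ) 1 := by
        intro k; split; exacts [ha k, hb k]
      have heq : (fun k => if k ∈ insert i s then a k else b k)
          = Function.update (fun k => if k ∈ s then a k else b k) i (a i) := by
        funext k
        by_cases hk : k = i
        · simp [hk, Function.update_apply, hins]
        · simp [Finset.mem_insert, hk, Function.update_apply]
      rw [heq]
      refine le_trans (mono_coord hC hd _ hw i (a i) (ha i).1 ?_) ih
      show a i ≤ if i ∈ s then a i else b i
      rw [if_neg hins]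
      exact hab i
  have := key Finset.univ
  simpa using this

lemma copula_lip_s2 {d : ℕ} {C : (Fin d → ℝ) → ℝ} (hC : IsCopula d C) (hd : 1 ≤ d)
    (a b : Fin d → ℝ) (ha : ∀ k, a k ∈ Set.Icc (0:ℝ) 1) (hb : ∀ k, b k ∈ Set.Icc (0:ℝ) 1)
    (hab : ∀ k, a k ≤ b k) : C b - C a ≤ ∑ k, (b k - a k) := by
  classical
  have key : ∀ s : Finset (Fin d),
      C b - C (fun k => if k ∈ s then a k else b k) ≤ ∑ k ∈ s, (b k - a k) := by
    intro s
    induction s using Finset.induction_on with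
    | empty => simp
    | insert _ _ hins ih =>
      rename_i i s
      have hw : ∀ k, (if k ∈ s then a k else b k) ∈ Set.Icc (0:ℝ) 1 := by
        intro k; split; exacts [ha k, hb k]
      have heq : (fun k => if k ∈ insert i s then a k else b k)
          = Function.update (fun k => if k ∈ s then a k else b k) i (a i) := by
        funext k
        by_cases hk : k = i
        · simp [hk, Function.update_apply, hins]
        · simp [Finset.mem_insert, hk, Function.update_apply]
      rw [heq, Finset.sum_insert hins]
      have hav : a i ≤ (fun k => if k ∈ s then a k else b k) i := by
        show a i ≤ if i ∈ s then a i else b i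
        rw [if_neg hins]
        exact hab i
      have hl := lip_coord hC hd _ hw i (a i) (ha i).1 hav
      rw [if_neg hins] at hl
      linarith
  have := key Finset.univ
  simpa using this

theorem refined_bound (d : ℕ) (hd : 2 ≤ d)
    (C : (Fin d → ℝ) → ℝ) (hC : IsCopula d C)
    (u : Fin d → ℝ) (hu : ∀ i, u i ∈ Set.Icc (0:ℝ) 1)
    (π : Equiv.Perm (Fin d)) :
    |C u - C (u ∘ π)| ≤
      min (Finset.univ.inf' ⟨⟨0, by omega⟩, Finset.mem_univ _⟩ u)
        (min (∑ i, (u i - Finset.univ.inf' ⟨⟨0, by omega⟩, Finset.mem_univ _⟩ u))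
          (((d : ℝ) - 1) + Finset.univ.inf' ⟨⟨0, by omega⟩, Finset.mem_univ _⟩ u
            - ∑ i, u i)) := by
  classical
  have hd1 : 1 ≤ d := by omega
  have hne : (Finset.univ : Finset (Fin d)).Nonempty :=
    ⟨⟨0, by omega⟩, Finset.mem_univ _⟩
  show |C u - C (u ∘ π)| ≤
      min (Finset.univ.inf' hne u)
        (min (∑ i, (u i - Finset.univ.inf' hne u))
          (((d : ℝ) - 1) + Finset.univ.inf' hne u - ∑ i, u i))
  set m := Finset.univ.inf' hne u with hm
  obtain ⟨i₀, -, hi₀⟩ := Finset.exists_mem_eq_inf' hne u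
  have hmmem : m ∈ Set.Icc (0:ℝ) 1 := by rw [hm, hi₀]; exact hu i₀
  have hm_le : ∀ i, m ≤ u i := fun i => Finset.inf'_le u (Finset.mem_univ i)
  have hup : ∀ k, (u ∘ π) k ∈ Set.Icc (0:ℝ) 1 := fun k => hu (π k)
  -- upper Fréchet bound
  have hupper : ∀ (v : Fin d → ℝ), (∀ k, v k ∈ Set.Icc (0:ℝ) 1) →
      ∀ i, C v ≤ v i := by
    intro v hv i
    set gI : Fin d → ℝ := fun k => if k = i then v i else 1 with hgI
    have hcube : ∀ k, gI k ∈ Set.Icc (0:ℝ) 1 := by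
      intro k; simp only [hgI]; split
      · exact hv i
      · exact ⟨zero_le_one, le_refl 1⟩
    have h1 : C v ≤ C gI := by
      apply copula_mono_s2 hC hd1 v gI hv hcube
      intro k; simp only [hgI]; split
      · next h => rw [h]
      · exact (hv k).2
    have h2 : C gI = v i := by
      have := hC.2.1 gI hcube i (by intro j hj; simp [hgI, hj])
      rw [this]; simp [hgI]
    linarith
  -- nonnegativity
  have hlow0 : ∀ (v : Fin d → ℝ), (∀ k, v k ∈ Set.Icc (0:ℝ) 1) → 0 ≤ C v := by
    intro v hv
    have hzcube : ∀ _ : Fin d, (0:ℝ) ∈ Set.Icc (0:ℝ) 1 := fun _ => ⟨le_refl _, zero_le_one⟩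
    have h1 : C (fun _ => (0:ℝ)) ≤ C v :=
      copula_mono_s2 hC hd1 _ v (fun k => hzcube k) hv (fun k => (hv k).1)
    have h2 : C (fun _ => (0:ℝ)) = 0 := hC.1 _ (fun k => hzcube k) ⟨i₀, rfl⟩
    linarith
  -- lower Fréchet bound
  have hones : C (fun _ => (1:ℝ)) = 1 := by
    have := hC.2.1 (fun _ => (1:ℝ)) (fun _ => ⟨zero_le_one, le_refl 1⟩) i₀
      (fun _ _ => rfl)
    simpa using this
  have hlower : ∀ (v : Fin d → ℝ), (∀ k, v k ∈ Set.Icc (0:ℝ) 1) →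
      (∑ i, v i) - ((d:ℝ) - 1) ≤ C v := by
    intro v hv
    have hl := copula_lip_s2 hC hd1 v (fun _ => (1:ℝ)) hv
      (fun _ => ⟨zero_le_one, le_refl 1⟩) (fun k => (hv k).2)
    rw [hones] at hl
    have hs : ∑ k : Fin d, ((1:ℝ) - v k) = (d:ℝ) - ∑ k, v k := by
      rw [Finset.sum_sub_distrib, Finset.sum_const, Finset.card_univ, Fintype.card_fin]
      simp
    rw [hs] at hl
    linarith
  -- Lipschitz bound from the constant vector `m`
  have hmcube : ∀ k : Fin d, m ∈ Set.Icc (0:ℝ) 1 := fun _ => hmmem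
  have hlipu : C u - C (fun _ => m) ≤ ∑ k, (u k - m) :=
    copula_lip_s2 hC hd1 (fun _ => m) u hmcube hu hm_le
  have hlipup : C (u ∘ π) - C (fun _ => m) ≤ ∑ k, (u k - m) := by
    have h1 : C (u ∘ π) - C (fun _ => m) ≤ ∑ k, ((u ∘ π) k - m) :=
      copula_lip_s2 hC hd1 (fun _ => m) (u ∘ π) hmcube hup (fun k => hm_le (π k))
    have h2 : ∑ k, ((u ∘ π) k - m) = ∑ k, (u k - m) :=
      Equiv.sum_comp π (fun k => u k - m)
    linarith
  have hmonou : C (fun _ => m) ≤ C u :=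
    copula_mono_s2 hC hd1 (fun _ => m) u hmcube hu hm_le
  have hmonoup : C (fun _ => m) ≤ C (u ∘ π) :=
    copula_mono_s2 hC hd1 (fun _ => m) (u ∘ π) hmcube hup (fun k => hm_le (π k))
  -- collect the facts
  have hx0 : 0 ≤ C u := hlow0 u hu
  have hy0 : 0 ≤ C (u ∘ π) := hlow0 (u ∘ π) hup
  have hxm : C u ≤ m := Finset.le_inf' hne u (fun i _ => hupper u hu i)
  have hym : C (u ∘ π) ≤ m := by
    apply Finset.le_inf' hne u
    intro i _
    have := hupper (u ∘ π) hup (π.symm i)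
    simpa using this
  have hxlow : (∑ i, u i) - ((d:ℝ) - 1) ≤ C u := hlower u hu
  have hylow : (∑ i, u i) - ((d:ℝ) - 1) ≤ C (u ∘ π) := by
    have h1 := hlower (u ∘ π) hup
    have h2 : ∑ k, (u ∘ π) k = ∑ k, u k := Equiv.sum_comp π u
    rw [h2] at h1
    exact h1
  refine le_min ?_ (le_min ?_ ?_)
  · rw [abs_sub_le_iff]
    constructor <;> linarith
  · rw [abs_sub_le_iff]
    constructor <;> linarith
  · rw [abs_sub_le_iff]
    constructor <;> linarith
end

section
/- For every dimension d ≥ 2 there exist a d-copula C, a permutation π ∈ S_d, and a point u* ∈ [0,1]^d such that |C(u*) − C(u*_π)| = (d−1)/(d+1). Hence the bound (d−1)/(d+1) on the non-exchangeability of d-copulas is best possible. -/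
open MeasureTheory Set

noncomputable section



/-- product of 0/1-ifs is the if of the conjunction -/
lemma prod_ite_one {d : ℕ} (P : Fin d → Prop) [DecidablePred P] [Decidable (∀ i, P i)] :
    (∏ i, (if P i then (1:ℝ) else 0)) = if (∀ i, P i) then 1 else 0 := by
  by_cases h : ∀ i, P i
  · simp [h]
  · push_neg at h
    obtain ⟨i, hi⟩ := h
    rw [if_neg (by push_neg; exact ⟨i, hi⟩)]
    exact Finset.prod_eq_zero (Finset.mem_univ i) (by simp [hi])

lemma prod_neg' {d : ℕ} (s : Finset (Fin d)) (f : Fin d → ℝ) :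
    (∏ i ∈ s, (-f i)) = (-1 : ℝ) ^ s.card * ∏ i ∈ s, f i := by
  induction s using Finset.induction with
  | empty => simp
  | @insert a s' h ih => rw [Finset.prod_insert h, Finset.prod_insert h, ih,
      Finset.card_insert_of_notMem h]; ring

/-- key algebraic inclusion–exclusion identity -/
lemma key_alg {d : ℕ} (f g : Fin d → ℝ) :
    ∑ S : Finset (Fin d), (-1 : ℝ) ^ (d - S.card) * ∏ i, (if i ∈ S then f i else g i)
      = ∏ i, (f i - g i) := by
  classical
  have h1 : ∀ i : Fin d, f i - g i = f i + (-g i) := fun i => by ring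
  rw [Finset.prod_congr rfl (fun i _ => h1 i), Finset.prod_add]
  rw [Finset.powerset_univ]
  refine Finset.sum_congr rfl (fun S _ => ?_)
  rw [prod_neg']
  have hc : (Finset.univ \ S).card = d - S.card := by
    rw [Finset.card_sdiff_of_subset (Finset.subset_univ S), Finset.card_univ, Fintype.card_fin]
  have hsplit : (∏ i, (if i ∈ S then f i else g i))
      = (∏ i ∈ S, f i) * ∏ i ∈ Finset.univ \ S, g i := by
    rw [← Finset.prod_mul_prod_compl S (fun i => if i ∈ S then f i else g i),
      Finset.compl_eq_univ_sdiff]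
    congr 1
    · exact Finset.prod_congr rfl (fun i hi => if_pos hi)
    · exact Finset.prod_congr rfl (fun i hi => if_neg (Finset.mem_sdiff.1 hi).2)
  rw [hsplit, hc]
  ring


lemma fract_of_mem_Ico {y : ℝ} (h0 : 0 ≤ y) (h1 : y < 1) : Int.fract y = y :=
  Int.fract_eq_self.2 ⟨h0, h1⟩

lemma fract_of_mem_Ico2 {y : ℝ} (h0 : 1 ≤ y) (h1 : y < 2) : Int.fract y = y - 1 := by
  have : Int.fract (y - (1:ℤ)) = Int.fract y := Int.fract_sub_intCast y 1
  rw [← this]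
  push_cast
  exact fract_of_mem_Ico (by linarith) (by linarith)

/-- the margin measure lemma -/
lemma volume_fract_le {s u : ℝ} (hs : s ∈ Ico (0:ℝ) 1) (hu : u ∈ Icc (0:ℝ) 1) :
    volume (Ioc (0:ℝ) 1 ∩ {x | Int.fract (x + s) ≤ u}) = ENNReal.ofReal u := by
  obtain ⟨hs0, hs1⟩ := hs
  obtain ⟨hu0, hu1⟩ := hu
  rcases eq_or_lt_of_le hs0 with hs0' | hs0'
  · -- s = 0
    subst hs0'
    have hsub1 : Ioo (0:ℝ) u ⊆ Ioc (0:ℝ) 1 ∩ {x | Int.fract (x + 0) ≤ u} := by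
      intro x ⟨hx0, hxu⟩
      refine ⟨⟨hx0, by linarith⟩, ?_⟩
      simp only [mem_setOf_eq, add_zero]
      rw [fract_of_mem_Ico (le_of_lt hx0) (by linarith)]
      linarith
    have hsub2 : Ioc (0:ℝ) 1 ∩ {x | Int.fract (x + 0) ≤ u} ⊆ Ioc (0:ℝ) u ∪ {1} := by
      rintro x ⟨⟨hx0, hx1⟩, hx⟩
      simp only [mem_setOf_eq, add_zero] at hx
      rcases eq_or_lt_of_le hx1 with h1 | h1
      · exact Or.inr (by simp [h1])
      · rw [fract_of_mem_Ico (le_of_lt hx0) h1] at hx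
        exact Or.inl ⟨hx0, hx⟩
    refine le_antisymm ?_ ?_
    · calc volume (Ioc (0:ℝ) 1 ∩ {x | Int.fract (x + 0) ≤ u})
          ≤ volume (Ioc (0:ℝ) u ∪ {1}) := measure_mono hsub2
        _ ≤ volume (Ioc (0:ℝ) u) + volume ({1} : Set ℝ) := measure_union_le _ _
        _ = ENNReal.ofReal u := by simp [Real.volume_Ioc]
    · calc ENNReal.ofReal u = volume (Ioo (0:ℝ) u) := by simp [Real.volume_Ioo]
        _ ≤ _ := measure_mono hsub1
  · -- 0 < s
    rcases le_or_gt s u with hsu | hsu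
    · -- s ≤ u
      have hsub1 : Ioo (0:ℝ) (u-s) ∪ Ioo (1-s) 1 ⊆
          Ioc (0:ℝ) 1 ∩ {x | Int.fract (x + s) ≤ u} := by
        rintro x (⟨hx0, hxu⟩ | ⟨hx0, hx1⟩)
        · refine ⟨⟨hx0, by linarith⟩, ?_⟩
          simp only [mem_setOf_eq]
          rw [fract_of_mem_Ico (by linarith) (by linarith)]
          linarith
        · refine ⟨⟨by linarith, le_of_lt hx1⟩, ?_⟩
          simp only [mem_setOf_eq]
          rw [fract_of_mem_Ico2 (by linarith) (by linarith)]
          linarith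
      have hsub2 : Ioc (0:ℝ) 1 ∩ {x | Int.fract (x + s) ≤ u} ⊆
          Ioc (0:ℝ) (u-s) ∪ Ico (1-s) 1 ∪ {1} := by
        rintro x ⟨⟨hx0, hx1⟩, hx⟩
        simp only [mem_setOf_eq] at hx
        rcases eq_or_lt_of_le hx1 with h1 | h1
        · exact Or.inr (by simp [h1])
        rcases lt_or_ge x (1-s) with h2 | h2
        · rw [fract_of_mem_Ico (by linarith) (by linarith)] at hx
          exact Or.inl (Or.inl ⟨hx0, by linarith⟩)
        · exact Or.inl (Or.inr ⟨h2, h1⟩)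
      refine le_antisymm ?_ ?_
      · calc volume (Ioc (0:ℝ) 1 ∩ {x | Int.fract (x + s) ≤ u})
            ≤ volume (Ioc (0:ℝ) (u-s) ∪ Ico (1-s) 1 ∪ {1}) := measure_mono hsub2
          _ ≤ volume (Ioc (0:ℝ) (u-s) ∪ Ico (1-s) 1) + volume ({1} : Set ℝ) :=
              measure_union_le _ _
          _ ≤ volume (Ioc (0:ℝ) (u-s)) + volume (Ico (1-s) (1:ℝ)) + 0 := by
              gcongr; exact measure_union_le _ _; simp
          _ = ENNReal.ofReal (u-s) + ENNReal.ofReal s + 0 := by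
              rw [Real.volume_Ioc, Real.volume_Ico]; norm_num
          _ = ENNReal.ofReal u := by
              rw [add_zero, ← ENNReal.ofReal_add (by linarith) (by linarith)]
              norm_num
      · have hdisj : Disjoint (Ioo (0:ℝ) (u-s)) (Ioo (1-s) 1) := by
          apply Set.disjoint_left.2
          rintro x ⟨_, h1⟩ ⟨h2, _⟩
          linarith
        calc ENNReal.ofReal u = ENNReal.ofReal (u - s) + ENNReal.ofReal s := by
              rw [← ENNReal.ofReal_add (by linarith) (by linarith)]; norm_num
          _ = volume (Ioo (0:ℝ) (u-s)) + volume (Ioo (1-s) (1:ℝ)) := by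
              rw [Real.volume_Ioo, Real.volume_Ioo]; norm_num
          _ = volume (Ioo (0:ℝ) (u-s) ∪ Ioo (1-s) 1) :=
              (measure_union hdisj measurableSet_Ioo).symm
          _ ≤ _ := measure_mono hsub1
    · -- u < s
      have hsub1 : Ioo (1-s) (1-s+u) ⊆ Ioc (0:ℝ) 1 ∩ {x | Int.fract (x + s) ≤ u} := by
        rintro x ⟨hx0, hx1⟩
        refine ⟨⟨by linarith, by linarith⟩, ?_⟩
        simp only [mem_setOf_eq]
        rw [fract_of_mem_Ico2 (by linarith) (by linarith)]
        linarith
      have hsub2 : Ioc (0:ℝ) 1 ∩ {x | Int.fract (x + s) ≤ u} ⊆ Icc (1-s) (1-s+u) := by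
        rintro x ⟨⟨hx0, hx1⟩, hx⟩
        simp only [mem_setOf_eq] at hx
        rcases lt_or_ge x (1-s) with h2 | h2
        · rw [fract_of_mem_Ico (by linarith) (by linarith)] at hx
          linarith
        · rcases lt_or_ge (x+s) 2 with h3 | h3
          · rw [fract_of_mem_Ico2 (by linarith) h3] at hx
            exact ⟨h2, by linarith⟩
          · linarith
      refine le_antisymm ?_ ?_
      · calc volume (Ioc (0:ℝ) 1 ∩ {x | Int.fract (x + s) ≤ u})
            ≤ volume (Icc (1-s) (1-s+u)) := measure_mono hsub2
          _ = ENNReal.ofReal u := by rw [Real.volume_Icc]; norm_num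
      · calc ENNReal.ofReal u = volume (Ioo (1-s) (1-s+u)) := by
              rw [Real.volume_Ioo]; norm_num
          _ ≤ _ := measure_mono hsub1



def shiftSet (d : ℕ) (σ : Fin d → ℝ) (u : Fin d → ℝ) : Set ℝ :=
  Ioc (0:ℝ) 1 ∩ ⋂ i, {x | Int.fract (x + σ i) ≤ u i}

def shiftC (d : ℕ) (σ : Fin d → ℝ) (u : Fin d → ℝ) : ℝ :=
  (volume (shiftSet d σ u)).toReal

lemma measurable_Dset {d : ℕ} (σ : Fin d → ℝ) (i : Fin d) (t : ℝ) :
    MeasurableSet {x : ℝ | Int.fract (x + σ i) ≤ t} :=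
  measurableSet_le (measurable_fract.comp (measurable_add_const (σ i))) measurable_const

lemma measurable_shiftInter {d : ℕ} (σ : Fin d → ℝ) (u : Fin d → ℝ) :
    MeasurableSet (⋂ i, {x : ℝ | Int.fract (x + σ i) ≤ u i}) :=
  MeasurableSet.iInter (fun i => measurable_Dset σ i (u i))

lemma ind_iInter {d : ℕ} (E : Fin d → Set ℝ) (x : ℝ) :
    (⋂ i, E i).indicator (fun _ => (1:ℝ)) x = ∏ i, (E i).indicator (fun _ => (1:ℝ)) x := by
  classical
  simp only [Set.indicator_apply, mem_iInter]
  rw [prod_ite_one (fun i => x ∈ E i)]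

theorem isCopula_shiftC (d : ℕ) (σ : Fin d → ℝ) (hσ : ∀ i, σ i ∈ Ico (0:ℝ) 1) :
    IsCopula d (shiftC d σ) := by
  classical
  refine ⟨?_, ?_, ?_⟩
  · -- grounded
    rintro u _ ⟨i, hi⟩
    have hsub : shiftSet d σ u ⊆ (fun x => x + σ i) ⁻¹' (Set.range ((↑) : ℤ → ℝ)) := by
      rintro x ⟨_, hx⟩
      have hxi : Int.fract (x + σ i) ≤ u i := by
        have := mem_iInter.1 hx i; exact this
      rw [hi] at hxi
      have h0 : Int.fract (x + σ i) = 0 :=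
        le_antisymm hxi (Int.fract_nonneg _)
      have : (x + σ i) - ⌊x + σ i⌋ = 0 := h0
      refine ⟨⌊x + σ i⌋, ?_⟩
      show ((⌊x + σ i⌋ : ℤ) : ℝ) = x + σ i
      linarith
    have hcnt : Set.Countable ((fun x : ℝ => x + σ i) ⁻¹' (Set.range ((↑) : ℤ → ℝ))) :=
      (Set.countable_range _).preimage (add_left_injective (σ i))
    have : volume (shiftSet d σ u) = 0 :=
      measure_mono_null hsub (hcnt.measure_zero volume)
    simp [shiftC, this]
  · -- margins
    intro u hu i hmarg
    have hset : shiftSet d σ u = Ioc (0:ℝ) 1 ∩ {x | Int.fract (x + σ i) ≤ u i} := by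
      unfold shiftSet
      congr 1
      apply Set.Subset.antisymm
      · intro x hx; exact mem_iInter.1 hx i
      · intro x hx
        apply mem_iInter.2
        intro j
        by_cases hj : j = i
        · subst hj; exact hx
        · show Int.fract (x + σ j) ≤ u j
          rw [hmarg j hj]
          exact (Int.fract_lt_one _).le
    rw [shiftC, hset, volume_fract_le (hσ i) (hu i),
      ENNReal.toReal_ofReal (hu i).1]
  · -- d-increasing
    intro a b ha hb hab
    set μ := volume.restrict (Ioc (0:ℝ) 1) with hμ
    haveI : IsFiniteMeasure μ := by
      constructor
      rw [hμ, Measure.restrict_apply_univ, Real.volume_Ioc]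
      exact ENNReal.ofReal_lt_top
    have hCμ : ∀ w : Fin d → ℝ, shiftC d σ w
        = ∫ x, (⋂ i, {y : ℝ | Int.fract (y + σ i) ≤ w i}).indicator (fun _ => (1:ℝ)) x ∂μ := by
      intro w
      rw [MeasureTheory.integral_indicator_const (1:ℝ) (measurable_shiftInter σ w), hμ,
        measureReal_restrict_apply (measurable_shiftInter σ w), Set.inter_comm]
      simp [shiftC, shiftSet, measureReal_def]
    have hint : ∀ w : Fin d → ℝ, Integrable
        ((⋂ i, {y : ℝ | Int.fract (y + σ i) ≤ w i}).indicator (fun _ => (1:ℝ))) μ :=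
      fun w => (integrable_const (1:ℝ)).indicator (measurable_shiftInter σ w)
    calc (0:ℝ) ≤ ∫ x, ∏ i, (({y : ℝ | Int.fract (y + σ i) ≤ b i}).indicator (fun _ => (1:ℝ)) x
          - ({y : ℝ | Int.fract (y + σ i) ≤ a i}).indicator (fun _ => (1:ℝ)) x) ∂μ := by
          apply integral_nonneg
          intro x
          apply Finset.prod_nonneg
          intro i _
          have hmono : ({y : ℝ | Int.fract (y + σ i) ≤ a i} : Set ℝ)
              ⊆ {y : ℝ | Int.fract (y + σ i) ≤ b i} :=
            fun y hy => le_trans hy (hab i)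
          simp only [Set.indicator_apply]
          split_ifs with h1 h2 h3
          · norm_num
          · norm_num
          · exact absurd (hmono h3) h1
          · norm_num
      _ = ∫ x, ∑ S : Finset (Fin d), (-1:ℝ)^(d - S.card) *
            (⋂ i, {y : ℝ | Int.fract (y + σ i) ≤ (if i ∈ S then b i else a i)}).indicator
              (fun _ => (1:ℝ)) x ∂μ := by
          apply integral_congr_ae
          filter_upwards with x
          rw [← key_alg]
          refine (Finset.sum_congr rfl (fun S _ => ?_)).symm
          congr 1
          rw [ind_iInter]
          refine Finset.prod_congr rfl (fun i _ => ?_)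
          by_cases hiS : i ∈ S <;> simp [hiS]
      _ = ∑ S : Finset (Fin d), ∫ x, (-1:ℝ)^(d - S.card) *
            (⋂ i, {y : ℝ | Int.fract (y + σ i) ≤ (if i ∈ S then b i else a i)}).indicator
              (fun _ => (1:ℝ)) x ∂μ := by
          apply integral_finset_sum
          intro S _
          exact ((hint _)).const_mul _
      _ = ∑ S : Finset (Fin d), (-1 : ℝ) ^ (d - S.card) *
            shiftC d σ (fun k => if k ∈ S then b k else a k) := by
          refine Finset.sum_congr rfl (fun S _ => ?_)
          rw [MeasureTheory.integral_const_mul, ← hCμ]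



def cc (d : ℕ) : ℝ := 1 / ((d:ℝ) + 1)

def sigmad (d : ℕ) : Fin d → ℝ := fun i => if Odd (i:ℕ) then ((d:ℝ) - (i:ℕ)) * cc d else 0

def ustar (d : ℕ) : Fin d → ℝ := fun i =>
  if Even (i:ℕ) then ((d:ℝ) - 1) * cc d else if (i:ℕ) = d - 1 then (d:ℝ) * cc d else 1

def pairf (d : ℕ) : Fin d → Fin d := fun i =>
  if _h : Odd (i:ℕ) then ⟨(i:ℕ) - 1, lt_of_le_of_lt (Nat.pred_le _) i.2⟩
  else if h2 : (i:ℕ) + 1 < d then ⟨(i:ℕ) + 1, h2⟩ else i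

lemma cc_pos (d : ℕ) : 0 < cc d := by
  unfold cc; positivity

lemma cc_sum (d : ℕ) : ((d:ℝ) + 1) * cc d = 1 := by
  unfold cc; field_simp

lemma pairf_invol (d : ℕ) : Function.Involutive (pairf d) := by
  intro i
  unfold pairf
  by_cases h : Odd (i:ℕ)
  · rw [dif_pos h]
    have h1 : 1 ≤ (i:ℕ) := h.pos
    have hnot : ¬ Odd ((i:ℕ) - 1) := by
      simp only [Nat.odd_iff] at h ⊢; omega
    rw [dif_neg hnot, dif_pos (by omega : (i:ℕ) - 1 + 1 < d)]
    refine Fin.ext ?_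
    show (i:ℕ) - 1 + 1 = (i:ℕ)
    omega
  · rw [dif_neg h]
    by_cases h2 : (i:ℕ) + 1 < d
    · rw [dif_pos h2]
      have hodd : Odd ((i:ℕ) + 1) := by
        simp only [Nat.odd_iff] at h ⊢; omega
      rw [dif_pos hodd]
      refine Fin.ext ?_
      show (i:ℕ) + 1 - 1 = (i:ℕ)
      omega
    · rw [dif_neg h2, dif_neg h, dif_neg h2]

def permd (d : ℕ) : Equiv.Perm (Fin d) := Function.Involutive.toPerm _ (pairf_invol d)

lemma sigmad_mem (d : ℕ) (hd : 2 ≤ d) : ∀ i, sigmad d i ∈ Ico (0:ℝ) 1 := by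
  intro i
  unfold sigmad
  by_cases h : Odd (i:ℕ)
  · rw [if_pos h]
    have h1 : 1 ≤ (i:ℕ) := h.pos
    have h2 : (i:ℕ) < d := i.2
    have hc := cc_pos d
    have hs := cc_sum d
    have c1 : (1:ℝ) ≤ (d:ℝ) - (i:ℕ) := by
      have : ((i:ℕ):ℝ) + 1 ≤ (d:ℝ) := by exact_mod_cast h2
      linarith
    have c2 : (d:ℝ) - (i:ℕ) ≤ (d:ℝ) - 1 := by
      have : (1:ℝ) ≤ ((i:ℕ):ℝ) := by exact_mod_cast h1
      linarith
    constructor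
    · positivity
    · nlinarith
  · rw [if_neg h]; constructor <;> norm_num

lemma vol_ustar (d : ℕ) (hd : 2 ≤ d) :
    volume (shiftSet d (sigmad d) (ustar d)) = ENNReal.ofReal (((d:ℝ) - 1) * cc d) := by
  have hc := cc_pos d
  have hs := cc_sum d
  have hD2 : (2:ℝ) ≤ (d:ℝ) := by exact_mod_cast hd
  have hd1c : ((d:ℝ) - 1) * cc d < 1 := by nlinarith
  have hd1c0 : 0 < ((d:ℝ) - 1) * cc d := by nlinarith
  have hdc : (d:ℝ) * cc d < 1 := by nlinarith
  have hsub1 : Ioo (0:ℝ) (((d:ℝ) - 1) * cc d) ⊆ shiftSet d (sigmad d) (ustar d) := by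
    rintro x ⟨hx0, hxu⟩
    have hx1 : x < 1 := lt_trans hxu hd1c
    refine ⟨⟨hx0, hx1.le⟩, mem_iInter.2 (fun i => ?_)⟩
    show Int.fract (x + sigmad d i) ≤ ustar d i
    by_cases h : Odd (i:ℕ)
    · by_cases htop : (i:ℕ) = d - 1
      · have hσ : sigmad d i = cc d := by
          unfold sigmad
          rw [if_pos h, htop, Nat.cast_sub (by omega : 1 ≤ d)]
          push_cast; ring
        have hu : ustar d i = (d:ℝ) * cc d := by
          unfold ustar
          rw [if_neg (by simp only [Nat.even_iff, Nat.odd_iff] at h ⊢; omega), if_pos htop]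
        rw [hσ, hu, fract_of_mem_Ico (by linarith) (by nlinarith)]
        nlinarith
      · have hu : ustar d i = 1 := by
          unfold ustar
          rw [if_neg (by simp only [Nat.even_iff, Nat.odd_iff] at h ⊢; omega), if_neg htop]
        rw [hu]
        exact (Int.fract_lt_one _).le
    · have hσ : sigmad d i = 0 := by unfold sigmad; rw [if_neg h]
      have hu : ustar d i = ((d:ℝ) - 1) * cc d := by
        unfold ustar
        rw [if_pos (Nat.not_odd_iff_even.1 h)]
      rw [hσ, hu, add_zero, fract_of_mem_Ico hx0.le hx1]
      exact hxu.le
  have hsub2 : shiftSet d (sigmad d) (ustar d) ⊆ Ioc (0:ℝ) (((d:ℝ) - 1) * cc d) ∪ {1} := by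
    rintro x ⟨⟨hx0, hx1⟩, hxI⟩
    rcases eq_or_lt_of_le hx1 with h1 | h1
    · exact Or.inr (by simp [h1])
    · have hi := mem_iInter.1 hxI ⟨0, by omega⟩
      simp only [mem_setOf_eq] at hi
      have hσ : sigmad d ⟨0, by omega⟩ = 0 := by
        unfold sigmad; rw [if_neg (by simp)]
      have hu : ustar d ⟨0, by omega⟩ = ((d:ℝ) - 1) * cc d := by
        unfold ustar; rw [if_pos (by simp)]
      rw [hσ, hu, add_zero, fract_of_mem_Ico hx0.le h1] at hi
      exact Or.inl ⟨hx0, hi⟩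
  refine le_antisymm ?_ ?_
  · calc volume (shiftSet d (sigmad d) (ustar d))
        ≤ volume (Ioc (0:ℝ) (((d:ℝ) - 1) * cc d) ∪ {1}) := measure_mono hsub2
      _ ≤ volume (Ioc (0:ℝ) (((d:ℝ) - 1) * cc d)) + volume ({1} : Set ℝ) :=
          measure_union_le _ _
      _ = ENNReal.ofReal (((d:ℝ) - 1) * cc d) := by simp [Real.volume_Ioc]
  · calc ENNReal.ofReal (((d:ℝ) - 1) * cc d)
        = volume (Ioo (0:ℝ) (((d:ℝ) - 1) * cc d)) := by simp [Real.volume_Ioo]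
      _ ≤ _ := measure_mono hsub1

lemma vol_perm (d : ℕ) (hd : 2 ≤ d) :
    volume (shiftSet d (sigmad d) (fun i => ustar d (pairf d i))) = 0 := by
  have hc := cc_pos d
  have hs := cc_sum d
  have hD2 : (2:ℝ) ≤ (d:ℝ) := by exact_mod_cast hd
  have hdc : (d:ℝ) * cc d < 1 := by nlinarith
  have hsub : shiftSet d (sigmad d) (fun i => ustar d (pairf d i))
      ⊆ Set.range (fun j : ℕ => 2*(j:ℝ)*cc d) ∪ {1} := by
    rintro x ⟨⟨hx0, hx1⟩, hxI⟩
    have hcon : ∀ i : Fin d, Int.fract (x + sigmad d i) ≤ ustar d (pairf d i) :=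
      fun i => mem_iInter.1 hxI i
    rcases eq_or_lt_of_le hx1 with h1 | hx1'
    · exact Or.inr (by simp [h1])
    left
    -- top bound : x ≤ d * c , and when d is odd x ≤ (d-1) * c
    have hxtop : x ≤ (d:ℝ) * cc d ∧ (Odd d → x ≤ ((d:ℝ) - 1) * cc d) := by
      rcases Nat.even_or_odd d with hde | hdo
      · -- d even : use index d-2
        have hi2 : d - 2 < d := by omega
        have hcon2 := hcon ⟨d - 2, hi2⟩
        have hoddd2 : ¬ Odd (d - 2) := by
          simp only [Nat.even_iff, Nat.odd_iff] at hde ⊢; omega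
        have hσ : sigmad d ⟨d - 2, hi2⟩ = 0 := by
          unfold sigmad; rw [if_neg hoddd2]
        have hpf : pairf d ⟨d - 2, hi2⟩ = ⟨d - 1, by omega⟩ := by
          unfold pairf
          rw [dif_neg hoddd2, dif_pos (show d - 2 + 1 < d by omega)]
          exact Fin.ext (by show d - 2 + 1 = d - 1; omega)
        have hu : ustar d ⟨d - 1, by omega⟩ = (d:ℝ) * cc d := by
          unfold ustar
          rw [if_neg (by simp only [Nat.even_iff, Nat.odd_iff] at hde ⊢; omega), if_pos rfl]
        rw [hσ, hpf, hu, add_zero, fract_of_mem_Ico hx0.le hx1'] at hcon2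
        refine ⟨hcon2, fun hdo => ?_⟩
        exact absurd hdo (by simp only [Nat.even_iff, Nat.odd_iff] at hde ⊢; omega)
      · -- d odd : use index d-1
        have hi2 : d - 1 < d := by omega
        have hcon2 := hcon ⟨d - 1, hi2⟩
        have hoddd1 : ¬ Odd (d - 1) := by
          simp only [Nat.odd_iff] at hdo ⊢; omega
        have hσ : sigmad d ⟨d - 1, hi2⟩ = 0 := by
          unfold sigmad; rw [if_neg hoddd1]
        have hpf : pairf d ⟨d - 1, hi2⟩ = ⟨d - 1, hi2⟩ := by
          unfold pairf
          rw [dif_neg hoddd1, dif_neg (show ¬ (d - 1 + 1 < d) by omega)]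
        have hu : ustar d ⟨d - 1, hi2⟩ = ((d:ℝ) - 1) * cc d := by
          unfold ustar
          rw [if_pos (by simp only [Nat.even_iff, Nat.odd_iff] at hdo ⊢; omega)]
        rw [hσ, hpf, hu, add_zero, fract_of_mem_Ico hx0.le hx1'] at hcon2
        have hle : ((d:ℝ) - 1) * cc d ≤ (d:ℝ) * cc d := by nlinarith
        exact ⟨le_trans hcon2 hle, fun _ => hcon2⟩
    -- floor argument
    set j : ℕ := ⌊x / (2 * cc d)⌋₊ with hj
    have h2c : (0:ℝ) < 2 * cc d := by linarith
    have hj1 : 2*(j:ℝ)*cc d ≤ x := by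
      have := Nat.floor_le (le_of_lt (div_pos hx0 h2c))
      rw [← hj] at this
      calc 2*(j:ℝ)*cc d = (j:ℝ) * (2 * cc d) := by ring
        _ ≤ (x / (2 * cc d)) * (2 * cc d) := by
            apply mul_le_mul_of_nonneg_right this (le_of_lt h2c)
        _ = x := by field_simp
    have hj2 : x < (2*(j:ℝ)+2) * cc d := by
      have := Nat.lt_floor_add_one (x / (2 * cc d))
      rw [← hj] at this
      calc x = (x / (2 * cc d)) * (2 * cc d) := by field_simp
        _ < ((j:ℝ)+1) * (2*cc d) := by
            apply mul_lt_mul_of_pos_right this h2c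
        _ = (2*(j:ℝ)+2) * cc d := by ring
    by_cases hxe : x = 2*(j:ℝ)*cc d
    · exact ⟨j, hxe.symm⟩
    have hlt : 2*(j:ℝ)*cc d < x := lt_of_le_of_ne hj1 (Ne.symm hxe)
    -- 2j+1 < d
    have h2jd : 2*j+1 < d := by
      have h2jr : 2*(j:ℝ) < (d:ℝ) := by
        have := lt_of_lt_of_le hlt hxtop.1
        exact lt_of_mul_lt_mul_right this (le_of_lt hc)
      have h2jn : 2*j < d := by exact_mod_cast h2jr
      rcases lt_or_eq_of_le (by omega : 2*j+1 ≤ d) with h | h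
      · exact h
      · exfalso
        have hdo : Odd d := ⟨j, by omega⟩
        have hx_le := hxtop.2 hdo
        have hcast : ((d:ℝ) - 1) = 2*(j:ℝ) := by
          have : (d:ℕ) = 2*j+1 := h.symm
          rw [this]; push_cast; ring
        rw [hcast] at hx_le
        linarith
    -- the contradiction via coordinate 2j+1
    exfalso
    have hodd : Odd (2*j+1) := ⟨j, by ring⟩
    have hconj := hcon ⟨2*j+1, h2jd⟩
    have hσ : sigmad d ⟨2*j+1, h2jd⟩ = ((d:ℝ) - (2*(j:ℝ)+1)) * cc d := by
      unfold sigmad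
      rw [if_pos hodd]
      norm_num
    have hpf : pairf d ⟨2*j+1, h2jd⟩ = ⟨2*j, by omega⟩ := by
      unfold pairf
      rw [dif_pos hodd]
      exact Fin.ext (by show 2*j+1-1 = 2*j; omega)
    have hu : ustar d ⟨2*j, by omega⟩ = ((d:ℝ) - 1) * cc d := by
      unfold ustar
      rw [if_pos (by show Even (2*j); exact even_two_mul j)]
    rw [hσ, hpf, hu] at hconj
    set s : ℝ := ((d:ℝ) - (2*(j:ℝ)+1)) * cc d with hsdef
    have hjd : (2*(j:ℝ)+1) + 1 ≤ (d:ℝ) := by exact_mod_cast h2jd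
    have hs0 : cc d ≤ s := by nlinarith
    have hs1 : s < 1 := by nlinarith
    rcases lt_or_ge (x + s) 1 with hcase | hcase
    · rw [fract_of_mem_Ico (by linarith) hcase] at hconj
      -- x ≤ (d-1)c - s = 2j c
      have : x ≤ 2*(j:ℝ)*cc d := by nlinarith
      linarith
    · -- x ≥ 1 - s = (2j+2) c
      have h1s : 1 - s = (2*(j:ℝ)+2) * cc d := by nlinarith
      have : (2*(j:ℝ)+2) * cc d ≤ x := by linarith
      linarith
  have hcnt : Set.Countable (Set.range (fun j : ℕ => 2*(j:ℝ)*cc d) ∪ {1}) :=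
    (Set.countable_range _).union (Set.countable_singleton 1)
  exact measure_mono_null hsub (hcnt.measure_zero volume)

theorem bound_is_sharp (d : ℕ) (hd : 2 ≤ d) :
    ∃ (C : (Fin d → ℝ) → ℝ) (π : Equiv.Perm (Fin d)) (u : Fin d → ℝ),
      IsCopula d C ∧ (∀ i, u i ∈ Set.Icc (0:ℝ) 1) ∧
      |C u - C (u ∘ π)| = ((d : ℝ) - 1) / ((d : ℝ) + 1) := by
  have hc := cc_pos d
  have hs := cc_sum d
  have hD2 : (2:ℝ) ≤ (d:ℝ) := by exact_mod_cast hd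
  have h0 : 0 ≤ ((d:ℝ) - 1) * cc d := by nlinarith
  refine ⟨shiftC d (sigmad d), permd d, ustar d, isCopula_shiftC d (sigmad d) (sigmad_mem d hd),
    ?_, ?_⟩
  · intro i
    unfold ustar
    split_ifs
    · exact ⟨h0, by nlinarith⟩
    · constructor <;> nlinarith
    · constructor <;> norm_num
  · have h1 : shiftC d (sigmad d) (ustar d) = ((d:ℝ) - 1) * cc d := by
      rw [shiftC, vol_ustar d hd, ENNReal.toReal_ofReal h0]
    have h2 : shiftC d (sigmad d) (ustar d ∘ ⇑(permd d)) = 0 := by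
      have heq : (ustar d ∘ ⇑(permd d)) = fun i => ustar d (pairf d i) := rfl
      rw [shiftC, heq, vol_perm d hd]
      simp
    rw [h1, h2, sub_zero, abs_of_nonneg h0]
    unfold cc
    field_simp

end
end

section
/- Let d > 3, let C be a d-copula, and let k be an integer with 1 ≤ k < (d−1)/2. Let C_{(d−k),a} and C_{(d−k),b} be two (d−k)-dimensional margins of C, i.e., functions obtained from C by setting the arguments at two (possibly different) fixed sets of k coordinate positions equal to 1. Then for all ũ ∈ [0,1]^{d−k}, |C_{(d−k),a}(ũ) − C_{(d−k),b}(ũ)| ≤ (d−1)/(d+1) < (d−k−1)/(d−k). -/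
/-- The `(d−k)`-dimensional margin of `C` obtained by setting the arguments at the
coordinate positions in `S` (a set of `k` positions) equal to `1`, and filling the
remaining `d−k` coordinates in increasing order with the `d−k` variables. -/
noncomputable def margin (d k : ℕ) (C : (Fin d → ℝ) → ℝ) (S : Finset (Fin d))
    (hS : Sᶜ.card = d - k) (u : Fin (d - k) → ℝ) : ℝ :=
  C fun i => if h : i ∈ Sᶜ then u ((Sᶜ.orderIsoOfFin hS).symm ⟨i, h⟩) else 1

namespace MB

variable {d : ℕ} {C : (Fin d → ℝ) → ℝ}

lemma mono_single (hC : IsCopula d C) {p : Fin d → ℝ}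
    (hp : ∀ i, p i ∈ Set.Icc (0:ℝ) 1) (i : Fin d) {s : ℝ}
    (hs0 : 0 ≤ s) (hsi : s ≤ p i) :
    C (Function.update p i s) ≤ C p := by
  obtain ⟨hg, hm, hinc⟩ := hC
  set a : Fin d → ℝ := fun l => if l = i then s else 0 with ha
  have hain : ∀ l, a l ∈ Set.Icc (0:ℝ) 1 := by
    intro l
    by_cases h : l = i
    · simp only [ha, if_pos h]; exact ⟨hs0, le_trans hsi (hp i).2⟩
    · simp only [ha, if_neg h]; exact ⟨le_refl _, zero_le_one⟩
  have hab : ∀ l, a l ≤ p l := by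
    intro l
    by_cases h : l = i
    · subst h; simp only [ha, if_pos rfl]; exact hsi
    · simp only [ha, if_neg h]; exact (hp l).1
  have h0 := hinc a p hain hp hab
  have hz : ∀ S : Finset (Fin d),
      S ∉ ({Finset.univ, Finset.univ.erase i} : Finset (Finset (Fin d))) →
      (-1:ℝ)^(d - S.card) * C (fun l => if l ∈ S then p l else a l) = 0 := by
    intro S hS
    simp only [Finset.mem_insert, Finset.mem_singleton] at hS
    push_neg at hS
    obtain ⟨h1, h2⟩ := hS
    have hex : ∃ j, j ≠ i ∧ j ∉ S := by
      by_contra hcon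
      push_neg at hcon
      by_cases hiS : i ∈ S
      · refine h1 (Finset.eq_univ_iff_forall.mpr fun j => ?_)
        by_cases hji : j = i
        · exact hji ▸ hiS
        · exact hcon j hji
      · refine h2 (Finset.Subset.antisymm ?_ ?_)
        · intro j hjS
          rw [Finset.mem_erase]
          exact ⟨fun hji => hiS (hji ▸ hjS), Finset.mem_univ j⟩
        · intro j hj
          rw [Finset.mem_erase] at hj
          exact hcon j hj.1
    obtain ⟨j, hji, hjS⟩ := hex
    have hzero : C (fun l => if l ∈ S then p l else a l) = 0 := by
      apply hg
      · intro l
        by_cases hl : l ∈ S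
        · simpa [hl] using hp l
        · simpa [hl] using hain l
      · exact ⟨j, by simp [hjS, ha, hji]⟩
    rw [hzero, mul_zero]
  have hpos : 0 < d := i.pos
  have hsum : ∑ S : Finset (Fin d),
        (-1:ℝ)^(d - S.card) * C (fun l => if l ∈ S then p l else a l)
      = ∑ S ∈ ({Finset.univ, Finset.univ.erase i} : Finset (Finset (Fin d))),
        (-1:ℝ)^(d - S.card) * C (fun l => if l ∈ S then p l else a l) :=
    (Finset.sum_subset (Finset.subset_univ _) (fun S _ hS => hz S hS)).symm
  have hne : (Finset.univ : Finset (Fin d)) ≠ Finset.univ.erase i := by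
    intro h
    have := Finset.mem_univ i
    rw [h, Finset.mem_erase] at this
    exact this.1 rfl
  rw [hsum, Finset.sum_pair hne] at h0
  have e1 : (fun l => if l ∈ (Finset.univ : Finset (Fin d)) then p l else a l) = p := by
    funext l; simp
  have e2 : (fun l => if l ∈ Finset.univ.erase i then p l else a l)
      = Function.update p i s := by
    funext l
    by_cases hl : l = i
    · subst hl; simp [ha, Function.update_self]
    · simp [Finset.mem_erase, hl, Function.update_of_ne hl]
  have c1 : d - (Finset.univ : Finset (Fin d)).card = 0 := by
    simp
  have c2 : d - (Finset.univ.erase i).card = 1 := by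
    rw [Finset.card_erase_of_mem (Finset.mem_univ i)]
    simp only [Finset.card_univ, Fintype.card_fin]
    omega
  rw [e1, e2, c1, c2] at h0
  simp only [pow_zero, pow_one, one_mul, neg_one_mul] at h0
  linarith

lemma supermod_pair (hC : IsCopula d C) {i j : Fin d} (hij : i ≠ j) {p : Fin d → ℝ}
    (hp : ∀ l, p l ∈ Set.Icc (0:ℝ) 1) {s s' : ℝ}
    (hs0 : 0 ≤ s) (hsi : s ≤ p i) (hs'0 : 0 ≤ s') (hs'j : s' ≤ p j) :
    C (Function.update p j s') - C (Function.update (Function.update p i s) j s')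
      ≤ C p - C (Function.update p i s) := by
  obtain ⟨hg, hm, hinc⟩ := hC
  set a : Fin d → ℝ := fun l => if l = i then s else if l = j then s' else 0 with ha
  have hain : ∀ l, a l ∈ Set.Icc (0:ℝ) 1 := by
    intro l
    by_cases h : l = i
    · simp only [ha, if_pos h]; exact ⟨hs0, le_trans hsi (hp i).2⟩
    · by_cases h' : l = j
      · simp only [ha, if_neg h, if_pos h']; exact ⟨hs'0, le_trans hs'j (hp j).2⟩
      · simp only [ha, if_neg h, if_neg h']; exact ⟨le_refl _, zero_le_one⟩
  have hab : ∀ l, a l ≤ p l := by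
    intro l
    by_cases h : l = i
    · subst h; simp only [ha, if_pos rfl]; exact hsi
    · by_cases h' : l = j
      · subst h'; simp only [ha, if_neg h, if_pos rfl]; exact hs'j
      · simp only [ha, if_neg h, if_neg h']; exact (hp l).1
  have h0 := hinc a p hain hp hab
  set A : Finset (Fin d) := Finset.univ with hA
  set B : Finset (Fin d) := Finset.univ.erase i with hB
  set B' : Finset (Fin d) := Finset.univ.erase j with hB'
  set E : Finset (Fin d) := (Finset.univ.erase i).erase j with hE
  have hiB : i ∉ B := by simp [hB]
  have hjB' : j ∉ B' := by simp [hB']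
  have hjB : j ∈ B := by simp [hB, Ne.symm hij]
  have hiB' : i ∈ B' := by simp [hB', hij]
  have hiE : i ∉ E := by simp [hE]
  have hjE : j ∉ E := by simp [hE]
  have hz : ∀ S : Finset (Fin d),
      S ∉ ({A, B, B', E} : Finset (Finset (Fin d))) →
      (-1:ℝ)^(d - S.card) * C (fun l => if l ∈ S then p l else a l) = 0 := by
    intro S hS
    simp only [Finset.mem_insert, Finset.mem_singleton] at hS
    push_neg at hS
    obtain ⟨h1, h2, h3, h4⟩ := hS
    have hex : ∃ l, l ≠ i ∧ l ≠ j ∧ l ∉ S := by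
      by_contra hcon
      push_neg at hcon
      by_cases hiS : i ∈ S <;> by_cases hjS : j ∈ S
      · refine h1 (Finset.eq_univ_iff_forall.mpr fun l => ?_)
        by_cases hli : l = i
        · exact hli ▸ hiS
        · by_cases hlj : l = j
          · exact hlj ▸ hjS
          · exact hcon l hli hlj
      · refine h3 (Finset.Subset.antisymm ?_ ?_)
        · intro l hlS
          simp only [hB', Finset.mem_erase, Finset.mem_univ, and_true]
          exact fun hlj => hjS (hlj ▸ hlS)
        · intro l hl
          simp only [hB', Finset.mem_erase] at hl
          by_cases hli : l = i
          · exact hli ▸ hiS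
          · exact hcon l hli hl.1
      · refine h2 (Finset.Subset.antisymm ?_ ?_)
        · intro l hlS
          simp only [hB, Finset.mem_erase, Finset.mem_univ, and_true]
          exact fun hli => hiS (hli ▸ hlS)
        · intro l hl
          simp only [hB, Finset.mem_erase] at hl
          by_cases hlj : l = j
          · exact hlj ▸ hjS
          · exact hcon l hl.1 hlj
      · refine h4 (Finset.Subset.antisymm ?_ ?_)
        · intro l hlS
          simp only [hE, Finset.mem_erase, Finset.mem_univ, and_true]
          exact ⟨fun hlj => hjS (hlj ▸ hlS), fun hli => hiS (hli ▸ hlS)⟩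
        · intro l hl
          simp only [hE, Finset.mem_erase] at hl
          exact hcon l hl.2.1 hl.1
    obtain ⟨l₀, hli, hlj, hlS⟩ := hex
    have hzero : C (fun l => if l ∈ S then p l else a l) = 0 := by
      apply hg
      · intro l
        by_cases hl : l ∈ S
        · simpa [hl] using hp l
        · simpa [hl] using hain l
      · exact ⟨l₀, by simp [hlS, ha, hli, hlj]⟩
    rw [hzero, mul_zero]
  have hd2 : 2 ≤ d := by
    have h1 := i.isLt
    have h2 := j.isLt
    have : i.1 ≠ j.1 := fun h => hij (Fin.ext h)
    omega
  -- distinctness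
  have hAB : A ≠ B := fun h => hiB (h ▸ Finset.mem_univ i)
  have hAB' : A ≠ B' := fun h => hjB' (h ▸ Finset.mem_univ j)
  have hAE : A ≠ E := fun h => hiE (h ▸ Finset.mem_univ i)
  have hBB' : B ≠ B' := fun h => hjB' (h ▸ hjB)
  have hBE : B ≠ E := fun h => hjE (h ▸ hjB)
  have hB'E : B' ≠ E := fun h => hiE (h ▸ hiB')
  have hsum : ∑ S : Finset (Fin d),
        (-1:ℝ)^(d - S.card) * C (fun l => if l ∈ S then p l else a l)
      = ∑ S ∈ ({A, B, B', E} : Finset (Finset (Fin d))),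
        (-1:ℝ)^(d - S.card) * C (fun l => if l ∈ S then p l else a l) :=
    (Finset.sum_subset (Finset.subset_univ _) (fun S _ hS => hz S hS)).symm
  rw [hsum] at h0
  rw [Finset.sum_insert (by simp [Finset.mem_insert, hAB, hAB', hAE]),
      Finset.sum_insert (by simp [Finset.mem_insert, hBB', hBE]),
      Finset.sum_insert (by simp [hB'E]), Finset.sum_singleton] at h0
  -- cards
  have cA : d - A.card = 0 := by simp [hA]
  have cB : d - B.card = 1 := by
    rw [hB, Finset.card_erase_of_mem (Finset.mem_univ i)]
    simp only [Finset.card_univ, Fintype.card_fin]; omega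
  have cB' : d - B'.card = 1 := by
    rw [hB', Finset.card_erase_of_mem (Finset.mem_univ j)]
    simp only [Finset.card_univ, Fintype.card_fin]; omega
  have cE : d - E.card = 2 := by
    rw [hE, Finset.card_erase_of_mem (by simp [Ne.symm hij]),
        Finset.card_erase_of_mem (Finset.mem_univ i)]
    simp only [Finset.card_univ, Fintype.card_fin]; omega
  -- points
  have eA : (fun l => if l ∈ A then p l else a l) = p := by
    funext l; simp [hA]
  have eB : (fun l => if l ∈ B then p l else a l) = Function.update p i s := by
    funext l
    by_cases hl : l = i
    · subst hl; simp [hB, ha, Function.update_self]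
    · simp [hB, Finset.mem_erase, hl, Function.update_of_ne hl]
  have eB' : (fun l => if l ∈ B' then p l else a l) = Function.update p j s' := by
    funext l
    by_cases hl : l = j
    · subst hl
      simp [hB', ha, Function.update_self, Ne.symm hij]
    · simp [hB', Finset.mem_erase, hl, Function.update_of_ne hl]
  have eE : (fun l => if l ∈ E then p l else a l)
      = Function.update (Function.update p i s) j s' := by
    funext l
    by_cases hl : l = j
    · subst hl
      simp [hE, ha, Function.update_self, Ne.symm hij]
    · by_cases hl' : l = i
      · subst hl'
        simp [hE, ha, Function.update_of_ne hl, Function.update_self]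
      · simp [hE, Finset.mem_erase, hl, hl', Function.update_of_ne hl,
          Function.update_of_ne hl']
  rw [eA, eB, eB', eE, cA, cB, cB', cE] at h0
  norm_num at h0
  linarith

lemma mono (hC : IsCopula d C) {a b : Fin d → ℝ}
    (hain : ∀ i, a i ∈ Set.Icc (0:ℝ) 1) (hbin : ∀ i, b i ∈ Set.Icc (0:ℝ) 1)
    (hab : ∀ i, a i ≤ b i) : C a ≤ C b := by
  have key : ∀ T : Finset (Fin d), C (fun l => if l ∈ T then a l else b l) ≤ C b := by
    intro T
    induction T using Finset.induction_on with
    | empty => simp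
    | @insert j T hj ih =>
      have hmix : ∀ l, (fun l => if l ∈ T then a l else b l) l ∈ Set.Icc (0:ℝ) 1 := by
        intro l; by_cases hl : l ∈ T
        · simpa [hl] using hain l
        · simpa [hl] using hbin l
      have e1 : (fun l => if l ∈ insert j T then a l else b l)
          = Function.update (fun l => if l ∈ T then a l else b l) j (a j) := by
        funext l
        by_cases hl : l = j
        · subst hl; simp [Function.update_self]
        · simp [Finset.mem_insert, hl, Function.update_of_ne hl]
      rw [e1]
      refine le_trans (mono_single hC hmix j (hain j).1 ?_) ih
      simp only [if_neg hj]
      exact hab j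
  have h := key Finset.univ
  have : (fun l => if l ∈ (Finset.univ : Finset (Fin d)) then a l else b l) = a := by
    funext l; simp
  rwa [this] at h

lemma single_lip (hC : IsCopula d C) {p : Fin d → ℝ}
    (hp : ∀ l, p l ∈ Set.Icc (0:ℝ) 1) (i : Fin d) {α β : ℝ}
    (h0 : 0 ≤ α) (hαβ : α ≤ β) (hβ1 : β ≤ 1) :
    C (Function.update p i β) - C (Function.update p i α) ≤ β - α := by
  have key : ∀ T : Finset (Fin d),
      C (Function.update p i β) - C (Function.update p i α) ≤
      C (Function.update (fun l => if l ∈ T then 1 else p l) i β)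
        - C (Function.update (fun l => if l ∈ T then 1 else p l) i α) := by
    intro T
    induction T using Finset.induction_on with
    | empty => simp
    | @insert j T hj ih =>
      refine le_trans ih ?_
      set q : Fin d → ℝ := fun l => if l ∈ T then 1 else p l with hq
      set q' : Fin d → ℝ := fun l => if l ∈ insert j T then 1 else p l with hq'
      by_cases hji : j = i
      · subst hji
        have e1 : ∀ c : ℝ, Function.update q' j c = Function.update q j c := by
          intro c; funext l
          by_cases hl : l = j
          · subst hl; simp [Function.update_self]
          · simp only [Function.update_of_ne hl, hq', hq, Finset.mem_insert, hl,
              false_or]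
        rw [e1 β, e1 α]
      · have hij : i ≠ j := fun h => hji h.symm
        have hq'q : ∀ l, l ≠ j → q' l = q l := by
          intro l hl
          simp only [hq', hq, Finset.mem_insert, hl, false_or]
        have hq'j : q' j = 1 := by simp [hq']
        have hqj : q j = p j := by simp [hq, hj]
        have hPin : ∀ l, Function.update q' i β l ∈ Set.Icc (0:ℝ) 1 := by
          intro l
          by_cases hl : l = i
          · subst hl; simp only [Function.update_self]
            exact ⟨le_trans h0 hαβ, hβ1⟩
          · simp only [Function.update_of_ne hl, hq']
            by_cases h2 : l ∈ insert j T
            · simp [h2]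
            · simpa [h2] using hp l
        have hPi : Function.update q' i β i = β := Function.update_self i β q'
        have hPj : Function.update q' i β j = 1 := by
          rw [Function.update_of_ne (Ne.symm hij)]
          exact hq'j
        have Egen : ∀ c : ℝ,
            Function.update (Function.update q' i c) j (q j)
              = Function.update q i c := by
          intro c; funext l
          by_cases hl : l = j
          · subst hl
            rw [Function.update_self, Function.update_of_ne (Ne.symm hij)]
          · rw [Function.update_of_ne hl]
            by_cases hl' : l = i
            · subst hl'; rw [Function.update_self, Function.update_self]
            · rw [Function.update_of_ne hl', Function.update_of_ne hl']
              exact hq'q l hl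
        have h2 := supermod_pair hC hij hPin (s := α) (s' := q j)
          h0 (by rw [hPi]; exact hαβ) (by rw [hqj]; exact (hp j).1)
          (by rw [hPj, hqj]; exact (hp j).2)
        rw [Function.update_idem, Egen β, Egen α] at h2
        exact h2
  have h := key Finset.univ
  have honein : ∀ c : ℝ, 0 ≤ c → c ≤ 1 → ∀ l,
      Function.update (fun l : Fin d => if l ∈ (Finset.univ : Finset (Fin d)) then (1:ℝ) else p l) i c l ∈ Set.Icc (0:ℝ) 1 := by
    intro c hc0 hc1 l
    by_cases hl : l = i
    · subst hl; simp [Function.update_self, hc0, hc1]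
    · simp [Function.update_of_ne hl]
  have hval : ∀ c : ℝ, 0 ≤ c → c ≤ 1 →
      C (Function.update (fun l : Fin d => if l ∈ (Finset.univ : Finset (Fin d)) then (1:ℝ) else p l) i c) = c := by
    intro c hc0 hc1
    have := hC.2.1 _ (honein c hc0 hc1) i (fun l hl => by
      simp [Function.update_of_ne hl])
    rw [this, Function.update_self]
  rw [hval β (le_trans h0 hαβ) hβ1, hval α h0 (le_trans hαβ hβ1)] at h
  exact h

lemma lip (hC : IsCopula d C) {a b : Fin d → ℝ}
    (hain : ∀ i, a i ∈ Set.Icc (0:ℝ) 1) (hbin : ∀ i, b i ∈ Set.Icc (0:ℝ) 1)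
    (hab : ∀ i, a i ≤ b i) : C b - C a ≤ ∑ i, (b i - a i) := by
  have key : ∀ T : Finset (Fin d),
      C b - C (fun l => if l ∈ T then a l else b l) ≤ ∑ i ∈ T, (b i - a i) := by
    intro T
    induction T using Finset.induction_on with
    | empty => simp
    | @insert j T hj ih =>
      have hmix : ∀ l, (fun l => if l ∈ T then a l else b l) l ∈ Set.Icc (0:ℝ) 1 := by
        intro l; by_cases hl : l ∈ T
        · simpa [hl] using hain l
        · simpa [hl] using hbin l
      have e1 : (fun l => if l ∈ insert j T then a l else b l)
          = Function.update (fun l => if l ∈ T then a l else b l) j (a j) := by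
        funext l
        by_cases hl : l = j
        · subst hl; simp [Function.update_self]
        · simp [Finset.mem_insert, hl, Function.update_of_ne hl]
      have e2 : (fun l => if l ∈ T then a l else b l)
          = Function.update (fun l => if l ∈ T then a l else b l) j (b j) := by
        nth_rewrite 1 [show b j = (fun l => if l ∈ T then a l else b l) j from (if_neg hj).symm]
        rw [Function.update_eq_self]
      have hstep : C (fun l => if l ∈ T then a l else b l)
          - C (fun l => if l ∈ insert j T then a l else b l) ≤ b j - a j := by
        rw [e1]
        nth_rewrite 1 [e2]
        exact single_lip hC hmix j (hain j).1 (hab j) (hbin j).2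
      rw [Finset.sum_insert hj]
      linarith
  have h := key Finset.univ
  have e : (fun l => if l ∈ (Finset.univ : Finset (Fin d)) then a l else b l) = a := by
    funext l; simp
  rw [e] at h
  simpa using h

lemma C_one (hC : IsCopula d C) (hd : 0 < d) : C (fun _ => 1) = 1 := by
  have := hC.2.1 (fun _ => 1) (fun _ => ⟨zero_le_one, le_refl 1⟩) ⟨0, hd⟩
    (fun _ _ => rfl)
  simpa using this

lemma C_le_coord (hC : IsCopula d C) {x : Fin d → ℝ}
    (hx : ∀ i, x i ∈ Set.Icc (0:ℝ) 1) (i : Fin d) : C x ≤ x i := by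
  have hupd : ∀ l, Function.update (fun _ : Fin d => (1:ℝ)) i (x i) l ∈ Set.Icc (0:ℝ) 1 := by
    intro l
    by_cases hl : l = i
    · rw [hl, Function.update_self]; exact hx i
    · simp [Function.update_of_ne hl]
  have h1 : C x ≤ C (Function.update (fun _ => (1:ℝ)) i (x i)) := by
    refine mono hC hx hupd fun l => ?_
    by_cases hl : l = i
    · subst hl; simp [Function.update_self]
    · simp only [Function.update_of_ne hl]; exact (hx l).2
  have h2 : C (Function.update (fun _ => (1:ℝ)) i (x i)) = x i := by
    have := hC.2.1 _ hupd i (fun l hl => by simp [Function.update_of_ne hl])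
    rwa [Function.update_self] at this
  linarith

lemma C_nonneg (hC : IsCopula d C) (hd : 0 < d) {y : Fin d → ℝ}
    (hy : ∀ i, y i ∈ Set.Icc (0:ℝ) 1) : 0 ≤ C y := by
  set i₀ : Fin d := ⟨0, hd⟩
  have hupd : ∀ l, Function.update y i₀ 0 l ∈ Set.Icc (0:ℝ) 1 := by
    intro l
    by_cases hl : l = i₀
    · subst hl; simp [Function.update_self]
    · simp only [Function.update_of_ne hl]; exact hy l
  have h0 : C (Function.update y i₀ 0) = 0 :=
    hC.1 _ hupd ⟨i₀, Function.update_self i₀ 0 y⟩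
  have h1 : C (Function.update y i₀ 0) ≤ C y := by
    refine mono hC hupd hy fun l => ?_
    by_cases hl : l = i₀
    · rw [hl, Function.update_self]; exact (hy i₀).1
    · simp [Function.update_of_ne hl]
  linarith

lemma C_lower (hC : IsCopula d C) (hd : 0 < d) {y : Fin d → ℝ}
    (hy : ∀ i, y i ∈ Set.Icc (0:ℝ) 1) :
    (∑ i, y i) - ((d:ℝ) - 1) ≤ C y := by
  have h := lip hC hy (b := fun _ => 1) (fun _ => ⟨zero_le_one, le_refl 1⟩)
    (fun i => (hy i).2)
  rw [C_one hC hd] at h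
  have : ∑ i : Fin d, ((1:ℝ) - y i) = (d:ℝ) - ∑ i, y i := by
    rw [Finset.sum_sub_distrib]
    simp [Finset.card_univ]
  rw [this] at h
  linarith

lemma C_diff_le (hC : IsCopula d C) {x y : Fin d → ℝ}
    (hx : ∀ i, x i ∈ Set.Icc (0:ℝ) 1) (hy : ∀ i, y i ∈ Set.Icc (0:ℝ) 1) :
    C x - C y ≤ ∑ i, (max (x i) (y i) - y i) := by
  set z : Fin d → ℝ := fun i => max (x i) (y i) with hz
  have hzin : ∀ i, z i ∈ Set.Icc (0:ℝ) 1 :=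
    fun i => ⟨le_trans (hx i).1 (le_max_left _ _), max_le (hx i).2 (hy i).2⟩
  have h1 : C x ≤ C z := mono hC hx hzin fun i => le_max_left _ _
  have h2 : C z - C y ≤ ∑ i, (z i - y i) := lip hC hy hzin fun i => le_max_right _ _
  calc C x - C y ≤ C z - C y := by linarith
    _ ≤ ∑ i, (z i - y i) := h2

lemma key_bound {d k : ℕ} (hd : 3 < d) (hkd : k < d) {C : (Fin d → ℝ) → ℝ}
    (hC : IsCopula d C) (Sa Sb : Finset (Fin d)) (ha : Sa.card = k) (hb : Sb.card = k)
    (hSa' : Saᶜ.card = d - k) (hSb' : Sbᶜ.card = d - k)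
    (u : Fin (d - k) → ℝ) (hu : ∀ i, u i ∈ Set.Icc (0:ℝ) 1) :
    margin d k C Sa hSa' u - margin d k C Sb hSb' u ≤ ((d:ℝ) - 1) / ((d:ℝ) + 1) := by
  have hdpos : 0 < d := by omega
  have hn : 0 < d - k := by omega
  obtain ⟨j0, -, hj0⟩ := Finset.exists_min_image Finset.univ u ⟨⟨0, hn⟩, Finset.mem_univ _⟩
  set t : ℝ := u j0 with htdef
  have hmin : ∀ j, t ≤ u j := fun j => hj0 j (Finset.mem_univ j)
  have ht0 : 0 ≤ t := (hu j0).1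
  have ht1 : t ≤ 1 := (hu j0).2
  -- generic facts about the evaluation points
  have hfacts : ∀ (S : Finset (Fin d)) (hS : Sᶜ.card = d - k), S.card = k →
      (∀ i, (fun i => if h : i ∈ Sᶜ then u ((Sᶜ.orderIsoOfFin hS).symm ⟨i, h⟩) else 1) i
        ∈ Set.Icc (0:ℝ) 1) ∧
      (∀ i, t ≤ (fun i => if h : i ∈ Sᶜ then u ((Sᶜ.orderIsoOfFin hS).symm ⟨i, h⟩) else 1) i) ∧
      (∑ i ∈ Sᶜ, (fun i => if h : i ∈ Sᶜ then u ((Sᶜ.orderIsoOfFin hS).symm ⟨i, h⟩) else 1) i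
          = ∑ j, u j) ∧
      (∃ i0, (fun i => if h : i ∈ Sᶜ then u ((Sᶜ.orderIsoOfFin hS).symm ⟨i, h⟩) else 1) i0 = t) ∧
      (∑ i, (fun i => if h : i ∈ Sᶜ then u ((Sᶜ.orderIsoOfFin hS).symm ⟨i, h⟩) else 1) i
          = (k:ℝ) + ∑ j, u j) := by
    intro S hS hcard
    set e := Sᶜ.orderIsoOfFin hS with he
    set x : Fin d → ℝ := fun i => if h : i ∈ Sᶜ then u (e.symm ⟨i, h⟩) else 1 with hx
    have hxin : ∀ i, x i ∈ Set.Icc (0:ℝ) 1 := by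
      intro i
      by_cases h : i ∈ Sᶜ
      · simp only [hx, dif_pos h]; exact hu _
      · simp only [hx, dif_neg h]; exact ⟨zero_le_one, le_refl 1⟩
    have hxlb : ∀ i, t ≤ x i := by
      intro i
      by_cases h : i ∈ Sᶜ
      · simp only [hx, dif_pos h]; exact hmin _
      · simp only [hx, dif_neg h]; exact ht1
    have hsub : ∀ s : {z // z ∈ Sᶜ}, x s.1 = u (e.symm s) := by
      intro s
      simp only [hx, dif_pos s.2]
    have hxsum : ∑ i ∈ Sᶜ, x i = ∑ j, u j := by
      rw [← Finset.sum_coe_sort Sᶜ x]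
      rw [Fintype.sum_congr _ _ hsub]
      exact Equiv.sum_comp e.symm.toEquiv u
    have hex : ∃ i0, x i0 = t := by
      refine ⟨(e j0).1, ?_⟩
      rw [hsub (e j0)]
      simp [htdef]
    have hall : ∑ i, x i = (k:ℝ) + ∑ j, u j := by
      rw [← Finset.sum_add_sum_compl S x, hxsum]
      congr 1
      have : ∀ i ∈ S, x i = 1 := by
        intro i hi
        simp only [hx, dif_neg (by simp [hi] : ¬ i ∈ Sᶜ)]
      rw [Finset.sum_congr rfl this]
      simp [hcard]
    exact ⟨hxin, hxlb, hxsum, hex, hall⟩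
  obtain ⟨hxin, hxlb, hxsum, ⟨i0, hi0⟩, hxall⟩ := hfacts Sa hSa' ha
  obtain ⟨hyin, hylb, hysum, -, hyall⟩ := hfacts Sb hSb' hb
  set x : Fin d → ℝ := fun i => if h : i ∈ Saᶜ then u ((Saᶜ.orderIsoOfFin hSa').symm ⟨i, h⟩) else 1 with hxd
  set y : Fin d → ℝ := fun i => if h : i ∈ Sbᶜ then u ((Sbᶜ.orderIsoOfFin hSb').symm ⟨i, h⟩) else 1 with hyd
  have hmx : margin d k C Sa hSa' u = C x := rfl
  have hmy : margin d k C Sb hSb' u = C y := rfl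
  rw [hmx, hmy]
  set σ : ℝ := ∑ j, u j with hσ
  -- Claim A : C x - C y ≤ t
  have hCx_le : C x ≤ t := hi0 ▸ C_le_coord hC hxin i0
  have hCy0 : 0 ≤ C y := C_nonneg hC hdpos hyin
  have hA : C x - C y ≤ t := by linarith
  -- Claim B
  have hCy_lb : (k:ℝ) + σ - ((d:ℝ) - 1) ≤ C y := by
    have := C_lower hC hdpos hyin
    rw [hyall] at this
    linarith
  have hlipxy := C_diff_le hC hxin hyin
  have hsplit : ∑ i, (max (x i) (y i) - y i)
      = ∑ i ∈ Sa, (max (x i) (y i) - y i) + ∑ i ∈ Saᶜ, (max (x i) (y i) - y i) :=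
    (Finset.sum_add_sum_compl Sa _).symm
  have hSa_bound : ∑ i ∈ Sa, (max (x i) (y i) - y i) ≤ (k:ℝ) * (1 - t) := by
    have hterm : ∀ i ∈ Sa, max (x i) (y i) - y i ≤ 1 - t := by
      intro i hi
      have hx1 : x i = 1 := by
        simp only [hxd, dif_neg (by simp [hi] : ¬ i ∈ Saᶜ)]
      rw [hx1, max_eq_left (hyin i).2]
      linarith [hylb i]
    calc ∑ i ∈ Sa, (max (x i) (y i) - y i) ≤ ∑ i ∈ Sa, (1 - t) :=
          Finset.sum_le_sum hterm
      _ = (k:ℝ) * (1 - t) := by rw [Finset.sum_const, ha, nsmul_eq_mul]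
  have hSac_bound : ∑ i ∈ Saᶜ, (max (x i) (y i) - y i) ≤ σ - ((d:ℝ) - (k:ℝ)) * t := by
    have hterm : ∀ i ∈ Saᶜ, max (x i) (y i) - y i ≤ x i - t := by
      intro i _
      have h1 : max (x i) (y i) ≤ x i + y i - t :=
        max_le (by linarith [hylb i]) (by linarith [hxlb i])
      linarith
    calc ∑ i ∈ Saᶜ, (max (x i) (y i) - y i) ≤ ∑ i ∈ Saᶜ, (x i - t) :=
          Finset.sum_le_sum hterm
      _ = σ - ((d:ℝ) - (k:ℝ)) * t := by
          rw [Finset.sum_sub_distrib, hxsum, Finset.sum_const, hSa', nsmul_eq_mul]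
          congr 2
          rw [Nat.cast_sub hkd.le]
  have hB : 2 * (C x - C y) ≤ ((d:ℝ) - 1) * (1 - t) := by
    have h1 : C x - C y ≤ t - ((k:ℝ) + σ - ((d:ℝ) - 1)) := by linarith
    have h2 : C x - C y ≤ (k:ℝ) * (1 - t) + (σ - ((d:ℝ) - (k:ℝ)) * t) := by
      rw [hsplit] at hlipxy
      linarith
    nlinarith [h1, h2]
  -- conclude
  rcases le_or_gt t (((d:ℝ) - 1) / ((d:ℝ) + 1)) with h | h
  · linarith
  · have hd4 : (4:ℝ) ≤ (d:ℝ) := by exact_mod_cast hd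
    have hdp : (0:ℝ) < (d:ℝ) + 1 := by linarith
    rw [div_lt_iff₀ hdp] at h
    rw [le_div_iff₀ hdp]
    nlinarith [mul_le_mul_of_nonneg_right hB (le_of_lt hdp),
      mul_lt_mul_of_pos_left h (show (0:ℝ) < (d:ℝ) - 1 by linarith)]

end MB

/-- Two `(d−k)`-dimensional margins of a `d`-copula (with `1 ≤ k < (d−1)/2`) differ by at
most `(d−1)/(d+1)`, which is strictly less than `(d−k−1)/(d−k)`. -/
theorem margins_bound (d k : ℕ) (hd : 3 < d) (hk1 : 1 ≤ k)
    (hk2 : (k : ℝ) < ((d : ℝ) - 1) / 2)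
    (C : (Fin d → ℝ) → ℝ) (hC : IsCopula d C)
    (Sa Sb : Finset (Fin d)) (ha : Sa.card = k) (hb : Sb.card = k)
    (u : Fin (d - k) → ℝ) (hu : ∀ i, u i ∈ Set.Icc (0:ℝ) 1) :
    |margin d k C Sa (by simp [Finset.card_compl, ha]) u -
        margin d k C Sb (by simp [Finset.card_compl, hb]) u| ≤
      ((d : ℝ) - 1) / ((d : ℝ) + 1) ∧
    ((d : ℝ) - 1) / ((d : ℝ) + 1) < ((d : ℝ) - (k : ℝ) - 1) / ((d : ℝ) - (k : ℝ)) := by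
  have hd4 : (4:ℝ) ≤ (d:ℝ) := by exact_mod_cast hd
  have hk0 : (0:ℝ) ≤ (k:ℝ) := Nat.cast_nonneg k
  have hkd : k < d := by
    have h1 : (k:ℝ) < (d:ℝ) := by linarith
    exact_mod_cast h1
  constructor
  · rw [abs_sub_le_iff]
    exact ⟨MB.key_bound hd hkd hC Sa Sb ha hb _ _ u hu,
           MB.key_bound hd hkd hC Sb Sa hb ha _ _ u hu⟩
  · have h2k : 2 * (k:ℝ) < (d:ℝ) - 1 := by linarith
    have hdk : (0:ℝ) < (d:ℝ) - (k:ℝ) := by linarith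
    rw [div_lt_div_iff₀ (by linarith) hdk]
    nlinarith [h2k]
end
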